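/- arXiv:2601.15601 — 3 statements merged into one kernel-verified Lean document; each statement's English description precedes it below -/
import Mathlib

section
/- For every positive integer k and every complex number q with |q| < 1, the generating function of sptbar_k satisfies: sum over n ≥ 1 of sptbar_k(n) q^n = Pbar_k(q) · (-q^2;q)_∞ / (q^2;q)_∞ + (-1)^k · (q;q)_{k-1} / (-q;q)_k, where Pbar_1(q) = 1 and Pbar_k(q) = ((q^{k-1} - 1) Pbar_{k-1}(q) + q^{k-1}(1+q)) / (1+q^k) for k > 1. -/
open scoped BigOperators

/-- The finite q-Pochhammer symbol `(a; q)_N = ∏_{j=0}^{N-1} (1 - a q^j)`. -/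
noncomputable def qPoch (a q : ℂ) (N : ℕ) : ℂ := ∏ j ∈ Finset.range N, (1 - a * q ^ j)

/-- The infinite q-Pochhammer symbol `(a; q)_∞ = ∏_{j=0}^{∞} (1 - a q^j)`. -/
noncomputable def qPochInf (a q : ℂ) : ℂ := ∏' j : ℕ, (1 - a * q ^ j)

/-- An overpartition of `n`: a multiset of positive non-overlined parts together with a
finset of positive overlined parts (the overlined parts are distinct), with total sum `n`. -/
structure Overpartition (n : ℕ) where
  parts : Multiset ℕ
  overlined : Finset ℕ
  parts_pos : ∀ x ∈ parts, 0 < x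
  overlined_pos : ∀ x ∈ overlined, 0 < x
  sum_eq : parts.sum + ∑ x ∈ overlined, x = n

/-- `s` is the smallest non-overlined part of `π`, it appears exactly `k` times among the
non-overlined parts, and every overlined part is greater than `s`. -/
def SptbarCond (k : ℕ) {n : ℕ} (π : Overpartition n) (s : ℕ) : Prop :=
  s ∈ π.parts ∧ (∀ x ∈ π.parts, s ≤ x) ∧ π.parts.count s = k ∧ ∀ x ∈ π.overlined, s < x

/-- `SptbarCond` together with: every part other than `s` is incongruent to `s` modulo 2. -/
def SptbarOCond (k : ℕ) {n : ℕ} (π : Overpartition n) (s : ℕ) : Prop :=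
  SptbarCond k π s ∧ (∀ x ∈ π.parts, x ≠ s → x % 2 ≠ s % 2) ∧
    ∀ x ∈ π.overlined, x % 2 ≠ s % 2

/-- The number of parts of `π` that are greater than `s`. -/
def numGreater {n : ℕ} (π : Overpartition n) (s : ℕ) : ℕ :=
  (π.parts.filter (fun x => s < x)).card + π.overlined.card

/-- The total number of parts of the overpartition `π`. -/
def numParts {n : ℕ} (π : Overpartition n) : ℕ :=
  π.parts.card + π.overlined.card

/-- `sptbar k n`: the number of overpartitions of `n` whose smallest non-overlined part `s`
appears exactly `k` times and all of whose overlined parts are greater than `s`. -/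
noncomputable def sptbar (k n : ℕ) : ℕ :=
  Nat.card {π : Overpartition n // ∃ s, SptbarCond k π s}

/-- `sptbar' k n = a_e(k,n) - a_o(k,n)`. -/
noncomputable def sptbar' (k n : ℕ) : ℤ :=
  (Nat.card {π : Overpartition n // ∃ s, SptbarCond k π s ∧ Even (numGreater π s)} : ℤ) -
    (Nat.card {π : Overpartition n // ∃ s, SptbarCond k π s ∧ Odd (numGreater π s)} : ℤ)

/-- `sptbarO k n`: as `sptbar k n`, with all parts other than the smallest non-overlined part
incongruent to it modulo 2. -/
noncomputable def sptbarO (k n : ℕ) : ℕ :=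
  Nat.card {π : Overpartition n // ∃ s, SptbarOCond k π s}

/-- `sptbarO' k n = b_e(k,n) - b_o(k,n)`. -/
noncomputable def sptbarO' (k n : ℕ) : ℤ :=
  (Nat.card {π : Overpartition n // ∃ s, SptbarOCond k π s ∧ Even (numGreater π s)} : ℤ) -
    (Nat.card {π : Overpartition n // ∃ s, SptbarOCond k π s ∧ Odd (numGreater π s)} : ℤ)

/-- The number of overpartitions of `n` into even parts. -/
noncomputable def pbarE (n : ℕ) : ℕ :=
  Nat.card {π : Overpartition n // (∀ x ∈ π.parts, Even x) ∧ ∀ x ∈ π.overlined, Even x}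

/-- The number of overpartitions of `n` into odd parts with no non-overlined part equal to 1. -/
noncomputable def pbarOex (n : ℕ) : ℕ :=
  Nat.card {π : Overpartition n //
    (∀ x ∈ π.parts, Odd x) ∧ (∀ x ∈ π.overlined, Odd x) ∧ (1 : ℕ) ∉ π.parts}

/-- Among overpartitions of `n` into odd parts with no non-overlined 1's: the number of those
with an even number of parts minus the number of those with an odd number of parts. -/
noncomputable def pbarOex' (n : ℕ) : ℤ :=
  (Nat.card {π : Overpartition n // ((∀ x ∈ π.parts, Odd x) ∧ (∀ x ∈ π.overlined, Odd x) ∧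
      (1 : ℕ) ∉ π.parts) ∧ Even (numParts π)} : ℤ) -
    (Nat.card {π : Overpartition n // ((∀ x ∈ π.parts, Odd x) ∧ (∀ x ∈ π.overlined, Odd x) ∧
      (1 : ℕ) ∉ π.parts) ∧ Odd (numParts π)} : ℤ)

/-- `sptkd k n`: the number of partitions of `n` whose smallest part appears exactly `k`
times and all of whose remaining parts are distinct. -/
noncomputable def sptkd (k n : ℕ) : ℕ :=
  Nat.card {m : Multiset ℕ // (∀ x ∈ m, 0 < x) ∧ m.sum = n ∧
    ∃ s, s ∈ m ∧ (∀ x ∈ m, s ≤ x) ∧ m.count s = k ∧ ∀ x ∈ m, x ≠ s → m.count x = 1}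

/-- `Pbar q k`: `Pbar q 1 = 1` and
`Pbar q k = ((q^(k-1) - 1) * Pbar q (k-1) + q^(k-1)*(1+q)) / (1 + q^k)` for `k > 1`. -/
noncomputable def Pbar (q : ℂ) : ℕ → ℂ
  | 0 => 0
  | 1 => 1
  | (k + 2) => ((q ^ (k + 1) - 1) * Pbar q (k + 1) + q ^ (k + 1) * (1 + q)) / (1 + q ^ (k + 2))

namespace SptbarProof

open Finset

/-! ### Finiteness infrastructure -/

lemma multiset_card_le_sum (m : Multiset ℕ) (h : ∀ i ∈ m, 0 < i) : Multiset.card m ≤ m.sum := by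
  induction m using Multiset.induction with
  | empty => simp
  | cons a s ih =>
    simp only [Multiset.card_cons, Multiset.sum_cons]
    have ha := h a (Multiset.mem_cons_self a s)
    have := ih (fun i hi => h i (Multiset.mem_cons_of_mem hi))
    omega

lemma le_master (n : ℕ) (m : Multiset ℕ) (hpos : ∀ i ∈ m, 0 < i) (hsum : m.sum ≤ n) :
    m ≤ n • (Finset.range (n + 1)).val := by
  rw [Multiset.le_iff_count]
  intro a
  rw [Multiset.count_nsmul]
  by_cases ha : a ∈ m
  · have ha1 : a ≤ n := le_trans (Multiset.single_le_sum (fun x _ => Nat.zero_le x) a ha) hsum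
    have hmem : a ∈ (Finset.range (n + 1)).val := by
      rw [Finset.mem_val, Finset.mem_range]; omega
    have h2 : Multiset.count a (Finset.range (n + 1)).val = 1 :=
      Multiset.count_eq_one_of_mem (Finset.range (n + 1)).nodup hmem
    have h3 : Multiset.count a m ≤ Multiset.card m := Multiset.count_le_card a m
    have h4 := multiset_card_le_sum m hpos
    rw [h2, mul_one]
    omega
  · simp [Multiset.count_eq_zero_of_notMem ha]

lemma finite_multisets (n : ℕ) {P : Multiset ℕ → Prop}
    (h : ∀ m, P m → (∀ i ∈ m, 0 < i) ∧ m.sum ≤ n) : Finite {m : Multiset ℕ // P m} := by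
  have : ∀ m : {m : Multiset ℕ // P m},
      m.1 ∈ ((n • (Finset.range (n + 1)).val).powerset).toFinset := by
    intro m
    rw [Multiset.mem_toFinset, Multiset.mem_powerset]
    exact le_master n m.1 (h m.1 m.2).1 (h m.1 m.2).2
  exact Finite.of_injective
    (fun m => (⟨m.1, this m⟩ : {x // x ∈ ((n • (Finset.range (n + 1)).val).powerset).toFinset}))
    (fun a b hab => Subtype.ext (by have h := congrArg Subtype.val hab; exact h))

lemma fsum_val (f : Finset ℕ) : f.val.sum = ∑ x ∈ f, x := by
  rw [Finset.sum_eq_multiset_sum, Multiset.map_id']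

lemma finite_finsets (n : ℕ) {P : Finset ℕ → Prop}
    (h : ∀ f, P f → (∀ i ∈ f, 0 < i) ∧ ∑ x ∈ f, x ≤ n) : Finite {f : Finset ℕ // P f} := by
  have fin : Finite {m : Multiset ℕ // (∀ i ∈ m, 0 < i) ∧ m.sum ≤ n} :=
    finite_multisets n (fun m hm => hm)
  refine Finite.of_injective (β := {m : Multiset ℕ // (∀ i ∈ m, 0 < i) ∧ m.sum ≤ n})
    (fun f => ⟨f.1.val, fun i hi => (h f.1 f.2).1 i hi, by
      rw [fsum_val]; exact (h f.1 f.2).2⟩) ?_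
  intro a b hab
  exact Subtype.ext (Finset.val_inj.mp (congrArg Subtype.val hab))

lemma op_ext {n : ℕ} {π π' : Overpartition n} (h1 : π.parts = π'.parts)
    (h2 : π.overlined = π'.overlined) : π = π' := by
  cases π; cases π'; simp_all

instance (n : ℕ) : Finite (Overpartition n) := by
  have fm : Finite {m : Multiset ℕ // (∀ i ∈ m, 0 < i) ∧ m.sum ≤ n} :=
    finite_multisets n (fun m hm => hm)
  have ff : Finite {f : Finset ℕ // (∀ i ∈ f, 0 < i) ∧ ∑ x ∈ f, x ≤ n} :=
    finite_finsets n (fun f hf => hf)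
  refine Finite.of_injective (β := {m : Multiset ℕ // (∀ i ∈ m, 0 < i) ∧ m.sum ≤ n} ×
      {f : Finset ℕ // (∀ i ∈ f, 0 < i) ∧ ∑ x ∈ f, x ≤ n})
    (fun π => (⟨π.parts, π.parts_pos, by have := π.sum_eq; omega⟩,
      ⟨π.overlined, π.overlined_pos, by have := π.sum_eq; omega⟩)) ?_
  intro a b hab
  have h1 : a.parts = b.parts := congrArg (fun p => p.1.1) hab
  have h2 : a.overlined = b.overlined := congrArg (fun p => p.2.1) hab
  exact op_ext h1 h2

/-! ### Counting types -/

abbrev PT (s J n : ℕ) : Type := {m : Multiset ℕ // (∀ i ∈ m, s < i ∧ i ≤ J) ∧ m.sum = n}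
abbrev PTi (s n : ℕ) : Type := {m : Multiset ℕ // (∀ i ∈ m, s < i) ∧ m.sum = n}
abbrev DT (s J n : ℕ) : Type := {f : Finset ℕ // (∀ i ∈ f, s < i ∧ i ≤ J) ∧ ∑ x ∈ f, x = n}
abbrev DTi (s n : ℕ) : Type := {f : Finset ℕ // (∀ i ∈ f, s < i) ∧ ∑ x ∈ f, x = n}
abbrev NT (s n : ℕ) : Type :=
  {p : Multiset ℕ × Finset ℕ //
    (∀ i ∈ p.1, s < i) ∧ (∀ i ∈ p.2, s < i) ∧ p.1.sum + ∑ x ∈ p.2, x = n}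

instance (s J n : ℕ) : Finite (PT s J n) :=
  finite_multisets n (fun m hm => ⟨fun i hi => Nat.lt_of_le_of_lt (Nat.zero_le s) (hm.1 i hi).1,
    hm.2.le⟩)
instance (s n : ℕ) : Finite (PTi s n) :=
  finite_multisets n (fun m hm => ⟨fun i hi => Nat.lt_of_le_of_lt (Nat.zero_le s) (hm.1 i hi),
    hm.2.le⟩)
instance (s J n : ℕ) : Finite (DT s J n) :=
  finite_finsets n (fun f hf => ⟨fun i hi => Nat.lt_of_le_of_lt (Nat.zero_le s) (hf.1 i hi).1,
    hf.2.le⟩)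
instance (s n : ℕ) : Finite (DTi s n) :=
  finite_finsets n (fun f hf => ⟨fun i hi => Nat.lt_of_le_of_lt (Nat.zero_le s) (hf.1 i hi),
    hf.2.le⟩)
instance (s n : ℕ) : Finite (NT s n) := by
  have fm : Finite {m : Multiset ℕ // (∀ i ∈ m, 0 < i) ∧ m.sum ≤ n} :=
    finite_multisets n (fun m hm => hm)
  have ff : Finite {f : Finset ℕ // (∀ i ∈ f, 0 < i) ∧ ∑ x ∈ f, x ≤ n} :=
    finite_finsets n (fun f hf => hf)
  refine Finite.of_injective (β := {m : Multiset ℕ // (∀ i ∈ m, 0 < i) ∧ m.sum ≤ n} ×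
      {f : Finset ℕ // (∀ i ∈ f, 0 < i) ∧ ∑ x ∈ f, x ≤ n})
    (fun x => (⟨x.1.1, fun i hi => Nat.lt_of_le_of_lt (Nat.zero_le s) (x.2.1 i hi), by
        have := x.2.2.2; omega⟩,
      ⟨x.1.2, fun i hi => Nat.lt_of_le_of_lt (Nat.zero_le s) (x.2.2.1 i hi), by
        have := x.2.2.2; omega⟩)) ?_
  intro a b hab
  apply Subtype.ext
  have h1 := congrArg (fun p => (p.1 : Multiset ℕ)) hab
  have h2 := congrArg (fun p => (p.2 : Finset ℕ)) hab
  simp only at h1 h2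
  exact Prod.ext h1 h2

noncomputable def cP (s J n : ℕ) : ℕ := Nat.card (PT s J n)
noncomputable def cPi (s n : ℕ) : ℕ := Nat.card (PTi s n)
noncomputable def cD (s J n : ℕ) : ℕ := Nat.card (DT s J n)
noncomputable def cDi (s n : ℕ) : ℕ := Nat.card (DTi s n)
noncomputable def cN (s n : ℕ) : ℕ := Nat.card (NT s n)

end SptbarProof
namespace SptbarProof

open Finset

/-! ### Basic values -/

lemma PT_sum_zero (s J : ℕ) (x : PT s J 0) : x.1 = 0 := by
  obtain ⟨m, hm, hsum⟩ := x
  by_contra h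
  obtain ⟨a, ha⟩ := Multiset.exists_mem_of_ne_zero h
  have h1 := (hm a ha).1
  have h2 : a ≤ m.sum := Multiset.single_le_sum (fun x _ => Nat.zero_le x) a ha
  omega

lemma cP_zero (s J : ℕ) : cP s J 0 = 1 := by
  letI : Unique (PT s J 0) :=
    { default := ⟨0, by simp, rfl⟩
      uniq := fun x => Subtype.ext (by rw [PT_sum_zero s J x]) }
  exact Nat.card_unique

lemma cD_zero (s J : ℕ) : cD s J 0 = 1 := by
  have key : ∀ x : DT s J 0, x.1 = ∅ := by
    rintro ⟨f, hf, hsum⟩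
    rw [Finset.eq_empty_iff_forall_notMem]
    intro a ha
    have h1 := (hf a ha).1
    have h2 : a ≤ ∑ x ∈ f, x := Finset.single_le_sum (fun i _ => Nat.zero_le i) ha
    omega
  letI : Unique (DT s J 0) :=
    { default := ⟨∅, by simp, by simp⟩
      uniq := fun x => Subtype.ext (by rw [key x]) }
  exact Nat.card_unique

lemma cP_empty (s J n : ℕ) (hJ : J ≤ s) (hn : 0 < n) : cP s J n = 0 := by
  have : IsEmpty (PT s J n) := by
    constructor
    rintro ⟨m, hm, hsum⟩
    have hne : m ≠ 0 := by intro h0; rw [h0] at hsum; simp at hsum; omega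
    rcases Multiset.exists_mem_of_ne_zero hne with ⟨a, ha⟩
    have := (hm a ha).1
    have := (hm a ha).2
    omega
  exact Nat.card_of_isEmpty

lemma cD_empty (s J n : ℕ) (hJ : J ≤ s) (hn : 0 < n) : cD s J n = 0 := by
  have : IsEmpty (DT s J n) := by
    constructor
    rintro ⟨f, hf, hsum⟩
    have hne : f.Nonempty := by
      rcases Finset.eq_empty_or_nonempty f with rfl | h
      · simp at hsum; omega
      · exact h
    obtain ⟨a, ha⟩ := hne
    have := (hf a ha).1
    have := (hf a ha).2
    omega
  exact Nat.card_of_isEmpty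

/-! ### Recurrences -/

lemma cP_succ (s J n : ℕ) (hsJ : s ≤ J) :
    cP s (J + 1) n = cP s J n + if J + 1 ≤ n then cP s (J + 1) (n - (J + 1)) else 0 := by
  by_cases h : J + 1 ≤ n
  · rw [if_pos h]
    have e : PT s (J + 1) n ≃ PT s J n ⊕ PT s (J + 1) (n - (J + 1)) :=
      { toFun := fun x =>
          if hm : (J + 1) ∈ x.1 then
            Sum.inr ⟨x.1.erase (J + 1), fun i hi =>
                x.2.1 i (Multiset.mem_of_mem_erase hi), by
              have hc := Multiset.cons_erase hm
              have : (J + 1) + (x.1.erase (J + 1)).sum = n := by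
                rw [← Multiset.sum_cons, hc]; exact x.2.2
              omega⟩
          else
            Sum.inl ⟨x.1, fun i hi => ⟨(x.2.1 i hi).1, by
              have h1 := (x.2.1 i hi).2
              have h2 : i ≠ J + 1 := fun hiJ => hm (hiJ ▸ hi)
              omega⟩, x.2.2⟩
        invFun := fun y =>
          match y with
          | Sum.inl z => ⟨z.1, fun i hi => ⟨(z.2.1 i hi).1, by have := (z.2.1 i hi).2; omega⟩,
              z.2.2⟩
          | Sum.inr z => ⟨(J + 1) ::ₘ z.1, by
              intro i hi
              rcases Multiset.mem_cons.1 hi with rfl | h'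
              · omega
              · exact z.2.1 i h', by
              rw [Multiset.sum_cons, z.2.2]; omega⟩
        left_inv := by
          rintro ⟨m, hm, hsum⟩
          by_cases hmem : (J + 1) ∈ m
          · simp only [dif_pos hmem]
            exact Subtype.ext (Multiset.cons_erase hmem)
          · simp only [dif_neg hmem]
        right_inv := by
          rintro (⟨m, hm, hsum⟩ | ⟨m, hm, hsum⟩)
          · have hmem : (J + 1) ∉ m := fun hc => by have := (hm _ hc).2; omega
            simp only [dif_neg hmem]
          · have hmem : (J + 1) ∈ (J + 1) ::ₘ m := Multiset.mem_cons_self _ _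
            simp only [dif_pos hmem]
            congr 1
            exact Subtype.ext (Multiset.erase_cons_head _ _) }
    rw [cP, cP, cP, Nat.card_congr e, Nat.card_sum]
  · rw [if_neg h]
    have e : PT s (J + 1) n ≃ PT s J n :=
      { toFun := fun x => ⟨x.1, fun i hi => ⟨(x.2.1 i hi).1, by
          have h1 := (x.2.1 i hi).2
          have h2 : i ≤ x.1.sum := Multiset.single_le_sum (fun y _ => Nat.zero_le y) i hi
          have h3 := x.2.2
          omega⟩, x.2.2⟩
        invFun := fun x => ⟨x.1, fun i hi => ⟨(x.2.1 i hi).1, by have := (x.2.1 i hi).2; omega⟩,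
          x.2.2⟩
        left_inv := fun x => Subtype.ext rfl
        right_inv := fun x => Subtype.ext rfl }
    rw [cP, cP, Nat.card_congr e, Nat.add_zero]

lemma cD_succ (s J n : ℕ) (hsJ : s ≤ J) :
    cD s (J + 1) n = cD s J n + if J + 1 ≤ n then cD s J (n - (J + 1)) else 0 := by
  by_cases h : J + 1 ≤ n
  · rw [if_pos h]
    have e : DT s (J + 1) n ≃ DT s J n ⊕ DT s J (n - (J + 1)) :=
      { toFun := fun x =>
          if hm : (J + 1) ∈ x.1 then
            Sum.inr ⟨x.1.erase (J + 1), fun i hi => by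
                have h1 := Finset.mem_erase.1 hi
                have h2 := x.2.1 i h1.2
                exact ⟨h2.1, by have := h2.2; have := h1.1; omega⟩, by
              have hc : (J + 1) + ∑ i ∈ x.1.erase (J + 1), i = ∑ i ∈ x.1, i := by
                simpa using Finset.add_sum_erase x.1 (fun i => i) hm
              have := x.2.2
              omega⟩
          else
            Sum.inl ⟨x.1, fun i hi => ⟨(x.2.1 i hi).1, by
              have h1 := (x.2.1 i hi).2
              have h2 : i ≠ J + 1 := fun hiJ => hm (hiJ ▸ hi)
              omega⟩, x.2.2⟩
        invFun := fun y =>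
          match y with
          | Sum.inl z => ⟨z.1, fun i hi => ⟨(z.2.1 i hi).1, by have := (z.2.1 i hi).2; omega⟩,
              z.2.2⟩
          | Sum.inr z => ⟨insert (J + 1) z.1, by
              intro i hi
              rcases Finset.mem_insert.1 hi with rfl | h'
              · omega
              · have := z.2.1 i h'; omega, by
              have hni : (J + 1) ∉ z.1 := fun hc => by have := (z.2.1 _ hc).2; omega
              rw [Finset.sum_insert hni, z.2.2]; omega⟩
        left_inv := by
          rintro ⟨f, hf, hsum⟩
          by_cases hmem : (J + 1) ∈ f
          · simp only [dif_pos hmem]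
            exact Subtype.ext (Finset.insert_erase hmem)
          · simp only [dif_neg hmem]
        right_inv := by
          rintro (⟨f, hf, hsum⟩ | ⟨f, hf, hsum⟩)
          · have hmem : (J + 1) ∉ f := fun hc => by have := (hf _ hc).2; omega
            simp only [dif_neg hmem]
          · have hni : (J + 1) ∉ f := fun hc => by have := (hf _ hc).2; omega
            have hmem : (J + 1) ∈ insert (J + 1) f := Finset.mem_insert_self _ _
            simp only [dif_pos hmem]
            congr 1
            exact Subtype.ext (Finset.erase_insert hni) }
    rw [cD, cD, cD, Nat.card_congr e, Nat.card_sum]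
  · rw [if_neg h]
    have e : DT s (J + 1) n ≃ DT s J n :=
      { toFun := fun x => ⟨x.1, fun i hi => ⟨(x.2.1 i hi).1, by
          have h1 := (x.2.1 i hi).2
          have h2 : i ≤ ∑ y ∈ x.1, y := Finset.single_le_sum (fun y _ => Nat.zero_le y) hi
          have h3 := x.2.2
          omega⟩, x.2.2⟩
        invFun := fun x => ⟨x.1, fun i hi => ⟨(x.2.1 i hi).1, by have := (x.2.1 i hi).2; omega⟩,
          x.2.2⟩
        left_inv := fun x => Subtype.ext rfl
        right_inv := fun x => Subtype.ext rfl }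
    rw [cD, cD, Nat.card_congr e, Nat.add_zero]

/-! ### Stabilization -/

lemma cPi_eq (s n J : ℕ) (h : n ≤ J) : cPi s n = cP s J n := by
  have e : PTi s n ≃ PT s J n :=
    { toFun := fun x => ⟨x.1, fun i hi => ⟨x.2.1 i hi, by
        have h2 : i ≤ x.1.sum := Multiset.single_le_sum (fun y _ => Nat.zero_le y) i hi
        have h3 := x.2.2
        omega⟩, x.2.2⟩
      invFun := fun x => ⟨x.1, fun i hi => (x.2.1 i hi).1, x.2.2⟩
      left_inv := fun x => Subtype.ext rfl
      right_inv := fun x => Subtype.ext rfl }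
  rw [cPi, cP, Nat.card_congr e]

lemma cDi_eq (s n J : ℕ) (h : n ≤ J) : cDi s n = cD s J n := by
  have e : DTi s n ≃ DT s J n :=
    { toFun := fun x => ⟨x.1, fun i hi => ⟨x.2.1 i hi, by
        have h2 : i ≤ ∑ y ∈ x.1, y := Finset.single_le_sum (fun y _ => Nat.zero_le y) hi
        have h3 := x.2.2
        omega⟩, x.2.2⟩
      invFun := fun x => ⟨x.1, fun i hi => (x.2.1 i hi).1, x.2.2⟩
      left_inv := fun x => Subtype.ext rfl
      right_inv := fun x => Subtype.ext rfl }
  rw [cDi, cD, Nat.card_congr e]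

lemma cP_le_cPi (s J n : ℕ) : cP s J n ≤ cPi s n :=
  Nat.card_le_card_of_injective
    (fun x : PT s J n => (⟨x.1, fun i hi => (x.2.1 i hi).1, x.2.2⟩ : PTi s n))
    (fun a b hab => Subtype.ext (congrArg (fun y : PTi s n => y.1) hab))

lemma cD_le_cDi (s J n : ℕ) : cD s J n ≤ cDi s n :=
  Nat.card_le_card_of_injective
    (fun x : DT s J n => (⟨x.1, fun i hi => (x.2.1 i hi).1, x.2.2⟩ : DTi s n))
    (fun a b hab => Subtype.ext (congrArg (fun y : DTi s n => y.1) hab))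

/-! ### Cauchy decomposition of cN -/

lemma nat_card_sigma {ι : Type*} [Fintype ι] {γ : ι → Type*} [∀ i, Finite (γ i)] :
    Nat.card ((i : ι) × γ i) = ∑ i, Nat.card (γ i) := by
  letI : ∀ i, Fintype (γ i) := fun i => Fintype.ofFinite (γ i)
  simp [Nat.card_eq_fintype_card, Fintype.card_sigma]

lemma cN_eq (s n : ℕ) : cN s n = ∑ p ∈ antidiagonal n, cPi s p.1 * cDi s p.2 := by
  have e : NT s n ≃ (p : {p : ℕ × ℕ // p ∈ antidiagonal n}) × (PTi s p.1.1 × DTi s p.1.2) :=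
    { toFun := fun x => ⟨⟨(x.1.1.sum, ∑ i ∈ x.1.2, i), mem_antidiagonal.2 x.2.2.2⟩,
        ⟨⟨x.1.1, x.2.1, rfl⟩, ⟨x.1.2, x.2.2.1, rfl⟩⟩⟩
      invFun := fun y => ⟨(y.2.1.1, y.2.2.1), y.2.1.2.1, y.2.2.2.1, by
        rw [y.2.1.2.2, y.2.2.2.2]; exact mem_antidiagonal.1 y.1.2⟩
      left_inv := fun x => rfl
      right_inv := by
        rintro ⟨⟨⟨a, b⟩, hp⟩, ⟨⟨m, hm1, hm2⟩, ⟨f, hf1, hf2⟩⟩⟩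
        dsimp only at hm2 hf2 ⊢
        subst hm2
        subst hf2
        rfl }
  rw [cN, Nat.card_congr e, nat_card_sigma]
  rw [← Finset.sum_coe_sort (antidiagonal n) (fun p => cPi s p.1 * cDi s p.2)]
  exact Finset.sum_congr rfl fun p _ => by rw [Nat.card_prod]; rfl

end SptbarProof
namespace SptbarProof

open Finset

/-! ### Decomposition of sptbar -/

abbrev Fib (k n : ℕ) : Type :=
  {p : Fin (n + 1) × Fin (n + 1) // k * (p.1.val + 1) + p.2.val = n}

instance (k n : ℕ) : Fintype (Fib k n) := Subtype.fintype _

lemma spt_s_unique {k n : ℕ} {π : Overpartition n} {s s' : ℕ} (h : SptbarCond k π s)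
    (h' : SptbarCond k π s') : s = s' :=
  le_antisymm (h.2.1 s' h'.1) (h'.2.1 s h.1)

def Fmap (k n : ℕ) (y : (p : Fib k n) × NT (p.1.1.val + 1) p.1.2.val) : Overpartition n where
  parts := y.2.1.1 + Multiset.replicate k (y.1.1.1.val + 1)
  overlined := y.2.1.2
  parts_pos := by
    intro x hx
    rcases Multiset.mem_add.1 hx with h | h
    · have := y.2.2.1 x h; omega
    · have := Multiset.eq_of_mem_replicate h; omega
  overlined_pos := by intro x hx; have := y.2.2.2.1 x hx; omega
  sum_eq := by
    rw [Multiset.sum_add, Multiset.sum_replicate, smul_eq_mul]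
    have h3 := y.2.2.2.2
    have hp := y.1.2
    omega

lemma Fmap_cond {k n : ℕ} (hk : 1 ≤ k) (y : (p : Fib k n) × NT (p.1.1.val + 1) p.1.2.val) :
    SptbarCond k (Fmap k n y) (y.1.1.1.val + 1) := by
  refine ⟨?_, ?_, ?_, ?_⟩
  · exact Multiset.mem_add.2 (Or.inr (Multiset.mem_replicate.2 ⟨by omega, rfl⟩))
  · intro x hx
    rcases Multiset.mem_add.1 hx with h | h
    · have := y.2.2.1 x h; omega
    · have := Multiset.eq_of_mem_replicate h; omega
  · show Multiset.count _ (_ + _) = k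
    rw [Multiset.count_add, Multiset.count_replicate, if_pos rfl,
      Multiset.count_eq_zero_of_notMem (fun hc => by have := y.2.2.1 _ hc; omega)]
    omega
  · intro x hx
    have := y.2.2.2.1 x hx; omega

noncomputable def Fsub (k n : ℕ) (hk : 1 ≤ k)
    (y : (p : Fib k n) × NT (p.1.1.val + 1) p.1.2.val) :
    {π : Overpartition n // ∃ s, SptbarCond k π s} :=
  ⟨Fmap k n y, ⟨y.1.1.1.val + 1, Fmap_cond hk y⟩⟩

lemma Fsub_bij (k n : ℕ) (hk : 1 ≤ k) : Function.Bijective (Fsub k n hk) := by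
  constructor
  · rintro ⟨⟨⟨⟨t, ht⟩, ⟨m, hm⟩⟩, hp⟩, ⟨⟨mlt, f⟩, h1, h2, h3⟩⟩
      ⟨⟨⟨⟨t', ht'⟩, ⟨m', hm'⟩⟩, hp'⟩, ⟨⟨mlt', f'⟩, h1', h2', h3'⟩⟩ h
    dsimp only at hp hp'
    have hπ : Fmap k n ⟨⟨(⟨t, ht⟩, ⟨m, hm⟩), hp⟩, ⟨(mlt, f), h1, h2, h3⟩⟩ =
        Fmap k n ⟨⟨(⟨t', ht'⟩, ⟨m', hm'⟩), hp'⟩, ⟨(mlt', f'), h1', h2', h3'⟩⟩ :=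
      congrArg Subtype.val h
    have hc1 := Fmap_cond hk (k := k) (n := n) ⟨⟨(⟨t, ht⟩, ⟨m, hm⟩), hp⟩, ⟨(mlt, f), h1, h2, h3⟩⟩
    have hc2 := Fmap_cond hk (k := k) (n := n)
      ⟨⟨(⟨t', ht'⟩, ⟨m', hm'⟩), hp'⟩, ⟨(mlt', f'), h1', h2', h3'⟩⟩
    rw [← hπ] at hc2
    have hts : t + 1 = t' + 1 := spt_s_unique hc1 hc2
    obtain rfl : t = t' := by omega
    obtain rfl : m = m' := by omega
    have hparts := congrArg Overpartition.parts hπ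
    have hov : f = f' := congrArg Overpartition.overlined hπ
    simp only [Fmap] at hparts
    have hmlt : mlt = mlt' := add_right_cancel hparts
    subst hmlt
    subst hov
    rfl
  · rintro ⟨π, hπ⟩
    obtain ⟨s, hs⟩ := hπ
    have hs1 : 1 ≤ s := π.parts_pos s hs.1
    have hrep : Multiset.replicate k s ≤ π.parts :=
      Multiset.le_count_iff_replicate_le.1 (le_of_eq hs.2.2.1.symm)
    obtain ⟨u, hu⟩ := Multiset.le_iff_exists_add.1 hrep
    have husum : π.parts.sum = k * s + u.sum := by
      rw [hu, Multiset.sum_add, Multiset.sum_replicate, smul_eq_mul]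
    have hsum := π.sum_eq
    have hks : k * s ≤ n := by omega
    have hbt : s - 1 < n + 1 := by
      have : 1 * s ≤ k * s := Nat.mul_le_mul_right s hk
      omega
    have hbm : n - k * s < n + 1 := by omega
    have hcond1 : ∀ i ∈ π.parts - Multiset.replicate k s, s < i := by
      intro i hi
      have hmem : i ∈ π.parts := Multiset.mem_of_le tsub_le_self hi
      have hle : s ≤ i := hs.2.1 i hmem
      rcases Nat.lt_or_ge s i with h | h
      · exact h
      · exfalso
        have : i = s := by omega
        subst this
        have hcount : Multiset.count i (π.parts - Multiset.replicate k i) = 0 := by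
          rw [Multiset.count_sub, Multiset.count_replicate, if_pos rfl, hs.2.2.1]
          omega
        exact absurd (Multiset.count_pos.2 hi) (by omega)
    refine ⟨⟨⟨(⟨s - 1, hbt⟩, ⟨n - k * s, hbm⟩), by
        show k * (s - 1 + 1) + (n - k * s) = n
        rw [Nat.sub_add_cancel hs1]; omega⟩,
      ⟨(π.parts - Multiset.replicate k s, π.overlined), ?_, ?_, ?_⟩⟩, ?_⟩
    · intro i hi
      have := hcond1 i hi
      simp only
      omega
    · intro i hi
      have := hs.2.2.2 i hi
      simp only
      omega
    · simp only
      have : (π.parts - Multiset.replicate k s).sum = u.sum := by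
        rw [hu, add_tsub_cancel_left]
      omega
    · apply Subtype.ext
      apply op_ext
      · show (π.parts - Multiset.replicate k s) + Multiset.replicate k (s - 1 + 1) = π.parts
        rw [Nat.sub_add_cancel hs1]
        exact tsub_add_cancel_of_le hrep
      · rfl

lemma sptbar_card {k : ℕ} (hk : 1 ≤ k) (n : ℕ) :
    sptbar k n = ∑ p : Fib k n, cN (p.1.1.val + 1) p.1.2.val := by
  rw [sptbar, Nat.card_congr (Equiv.ofBijective (Fsub k n hk) (Fsub_bij k n hk)).symm,
    nat_card_sigma]
  rfl

end SptbarProof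
namespace SptbarProof

open Finset

/-! ### Polynomial bounds -/

lemma cP_le_poly (s J n : ℕ) : cP s J n ≤ (n + 1) ^ (J - s) := by
  have key : cP s J n ≤ Nat.card (↥(Finset.Ioc s J) → Fin (n + 1)) := by
    apply Nat.card_le_card_of_injective
      (f := fun (m : PT s J n) (j : ↥(Finset.Ioc s J)) =>
        (⟨m.1.count j.1, by
          have h1 : m.1.count j.1 ≤ Multiset.card m.1 := Multiset.count_le_card _ _
          have h2 : Multiset.card m.1 ≤ m.1.sum :=
            multiset_card_le_sum m.1 (fun i hi => by have := (m.2.1 i hi).1; omega)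
          have h3 := m.2.2
          omega⟩ : Fin (n + 1)))
    intro a b hab
    apply Subtype.ext
    ext i
    by_cases hi : i ∈ Finset.Ioc s J
    · have := congrFun hab ⟨i, hi⟩
      simpa using this
    · have ha : i ∉ a.1 := fun hc =>
        hi (Finset.mem_Ioc.2 ⟨(a.2.1 i hc).1, (a.2.1 i hc).2⟩)
      have hb : i ∉ b.1 := fun hc =>
        hi (Finset.mem_Ioc.2 ⟨(b.2.1 i hc).1, (b.2.1 i hc).2⟩)
      rw [Multiset.count_eq_zero_of_notMem ha, Multiset.count_eq_zero_of_notMem hb]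
  calc cP s J n ≤ Nat.card (↥(Finset.Ioc s J) → Fin (n + 1)) := key
    _ = (n + 1) ^ (J - s) := by
      rw [Nat.card_eq_fintype_card, Fintype.card_fun]
      simp [Nat.card_Ioc]

lemma cD_le_cP (s J n : ℕ) : cD s J n ≤ cP s J n := by
  apply Nat.card_le_card_of_injective
    (f := fun (f : DT s J n) => (⟨f.1.val, fun i hi => f.2.1 i hi, by
      rw [fsum_val]; exact f.2.2⟩ : PT s J n))
  intro a b hab
  exact Subtype.ext (Finset.val_inj.mp (congrArg Subtype.val hab))

lemma cD_le_poly (s J n : ℕ) : cD s J n ≤ (n + 1) ^ (J - s) :=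
  le_trans (cD_le_cP s J n) (cP_le_poly s J n)

/-! ### Summability from polynomial bounds -/

lemma summable_poly_geom {x : ℝ} (hx0 : 0 ≤ x) (hx : x < 1) (K : ℕ) :
    Summable (fun n : ℕ => ((n : ℝ) + 1) ^ K * x ^ n) := by
  have hgeom : Summable (fun n : ℕ => ((n : ℝ)) ^ K * x ^ n) :=
    summable_pow_mul_geometric_of_norm_lt_one K
      (by rwa [Real.norm_eq_abs, abs_of_nonneg hx0])
  have h2 : Summable (fun n : ℕ => (2 : ℝ) ^ K * ((n : ℝ) ^ K * x ^ n)) := hgeom.mul_left _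
  apply Summable.of_norm_bounded_eventually h2
  rw [Nat.cofinite_eq_atTop]
  filter_upwards [Filter.eventually_ge_atTop 1] with n hn
  rw [Real.norm_eq_abs, abs_of_nonneg (by positivity)]
  have h1 : ((n : ℝ) + 1) ^ K ≤ (2 * n : ℝ) ^ K := by
    apply pow_le_pow_left₀ (by positivity)
    have : (1 : ℝ) ≤ (n : ℝ) := by exact_mod_cast hn
    linarith
  calc ((n : ℝ) + 1) ^ K * x ^ n ≤ (2 * n : ℝ) ^ K * x ^ n := by
        apply mul_le_mul_of_nonneg_right h1 (by positivity)
    _ = 2 ^ K * ((n : ℝ) ^ K * x ^ n) := by ring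

variable {𝕜 : Type*} [RCLike 𝕜]

lemma summable_count {c : ℕ → ℕ} {K : ℕ} (hc : ∀ n, c n ≤ (n + 1) ^ K) {z : 𝕜}
    (hz : ‖z‖ < 1) : Summable (fun n => (c n : 𝕜) * z ^ n) := by
  apply Summable.of_norm
  have hb : ∀ n, ‖(c n : 𝕜) * z ^ n‖ ≤ ((n : ℝ) + 1) ^ K * ‖z‖ ^ n := by
    intro n
    rw [norm_mul, norm_pow, RCLike.norm_natCast]
    apply mul_le_mul_of_nonneg_right _ (by positivity)
    calc (c n : ℝ) ≤ ((n + 1 : ℕ) : ℝ) ^ K := by exact_mod_cast hc n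
      _ = ((n : ℝ) + 1) ^ K := by push_cast; ring
  exact Summable.of_nonneg_of_le (fun n => norm_nonneg _) hb
    (summable_poly_geom (norm_nonneg z) hz K)

lemma summable_cP {s J : ℕ} {z : 𝕜} (hz : ‖z‖ < 1) :
    Summable (fun n => (cP s J n : 𝕜) * z ^ n) :=
  summable_count (fun n => cP_le_poly s J n) hz

lemma summable_cD {s J : ℕ} {z : 𝕜} (hz : ‖z‖ < 1) :
    Summable (fun n => (cD s J n : 𝕜) * z ^ n) :=
  summable_count (fun n => cD_le_poly s J n) hz

/-! ### Generating functions for bounded counts -/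

lemma tsum_shift {c : ℕ} {f : ℕ → 𝕜} (hf : Summable f) (h0 : ∀ n < c, f n = 0) :
    ∑' n, f n = ∑' n, f (n + c) := by
  rw [← Summable.sum_add_tsum_nat_add c hf, Finset.sum_eq_zero (fun i hi => h0 i (Finset.mem_range.1 hi)),
    zero_add]

lemma hasSum_cP_bounded (s R : ℕ) {z : 𝕜} (hz : ‖z‖ < 1) :
    HasSum (fun n => (cP s (s + R) n : 𝕜) * z ^ n)
      (∏ i ∈ Finset.range R, (1 - z ^ (s + 1) * z ^ i)⁻¹) := by
  induction R with
  | zero =>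
    rw [Finset.prod_range_zero]
    have hfun : ∀ n : ℕ, (cP s (s + 0) n : 𝕜) * z ^ n = if n = 0 then 1 else 0 := by
      intro n
      rcases Nat.eq_zero_or_pos n with rfl | hn
      · simp [cP_zero]
      · rw [cP_empty s (s + 0) n (by omega) hn, if_neg (by omega)]
        simp
    have heq : (fun n : ℕ => (cP s (s + 0) n : 𝕜) * z ^ n)
        = fun n => if n = 0 then 1 else 0 := funext hfun
    rw [heq]
    exact hasSum_ite_eq 0 1
  | succ R ih =>
    show HasSum (fun n => (cP s (s + R + 1) n : 𝕜) * z ^ n) _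
    have hzc : ‖z ^ (s + R + 1)‖ < 1 := by
      rw [norm_pow]
      calc ‖z‖ ^ (s + R + 1) ≤ ‖z‖ ^ 1 := pow_le_pow_of_le_one (norm_nonneg z) hz.le (by omega)
      _ = ‖z‖ := pow_one _
      _ < 1 := hz
    have hzc1 : (1 : 𝕜) - z ^ (s + R + 1) ≠ 0 := by
      intro h
      have : (1 : 𝕜) = z ^ (s + R + 1) := by linear_combination h
      rw [← this] at hzc
      simp at hzc
    have hsummable : Summable (fun n => (cP s (s + R + 1) n : 𝕜) * z ^ n) := summable_cP hz
    set G := ∑' n, (cP s (s + R + 1) n : 𝕜) * z ^ n with hG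
    -- the shifted part
    have hshift : Summable (fun n : ℕ =>
        ((if s + R + 1 ≤ n then cP s (s + R + 1) (n - (s + R + 1)) else 0 : ℕ) : 𝕜) * z ^ n) := by
      rw [← summable_nat_add_iff (s + R + 1)]
      apply Summable.congr (hsummable.mul_right (z ^ (s + R + 1)))
      intro n
      rw [if_pos (by omega)]
      have h2 : n + (s + R + 1) - (s + R + 1) = n := by omega
      rw [h2]
      ring
    have hrec : ∀ n, (cP s (s + R + 1) n : 𝕜) * z ^ n =
        (cP s (s + R) n : 𝕜) * z ^ n +
          ((if s + R + 1 ≤ n then cP s (s + R + 1) (n - (s + R + 1)) else 0 : ℕ) : 𝕜)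
            * z ^ n := by
      intro n
      rw [cP_succ s (s + R) n (by omega)]
      push_cast [Nat.cast_ite]
      ring
    have hsum_shift : ∑' n,
        ((if s + R + 1 ≤ n then cP s (s + R + 1) (n - (s + R + 1)) else 0 : ℕ) : 𝕜) * z ^ n
        = z ^ (s + R + 1) * G := by
      rw [tsum_shift (c := s + R + 1) hshift (fun n hn => by rw [if_neg (by omega)]; simp)]
      have hcong : ∀ n : ℕ,
          ((if s + R + 1 ≤ n + (s + R + 1) then cP s (s + R + 1) (n + (s + R + 1) - (s + R + 1))
            else 0 : ℕ) : 𝕜) * z ^ (n + (s + R + 1))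
          = z ^ (s + R + 1) * ((cP s (s + R + 1) n : 𝕜) * z ^ n) := by
        intro n
        rw [if_pos (by omega)]
        have h2 : n + (s + R + 1) - (s + R + 1) = n := by omega
        rw [h2, pow_add]
        ring
      rw [tsum_congr hcong, hsummable.tsum_mul_left]
    have hGeq : G = (∏ i ∈ Finset.range R, (1 - z ^ (s + 1) * z ^ i)⁻¹)
        + z ^ (s + R + 1) * G := by
      conv_lhs => rw [hG, tsum_congr hrec]
      rw [Summable.tsum_add (summable_cP hz) hshift, ih.tsum_eq, hsum_shift]
    have hzsc : z ^ (s + 1) * z ^ R = z ^ (s + R + 1) := by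
      rw [← pow_add]; congr 1; omega
    have hGval : G = ∏ i ∈ Finset.range (R + 1), (1 - z ^ (s + 1) * z ^ i)⁻¹ := by
      rw [Finset.prod_range_succ, hzsc]
      have h2 : G * (1 - z ^ (s + R + 1)) = ∏ i ∈ Finset.range R, (1 - z ^ (s + 1) * z ^ i)⁻¹ := by
        linear_combination hGeq
      rw [← h2, mul_assoc, mul_inv_cancel₀ hzc1, mul_one]
    exact hGval ▸ hsummable.hasSum

lemma hasSum_cD_bounded (s R : ℕ) {z : 𝕜} (hz : ‖z‖ < 1) :
    HasSum (fun n => (cD s (s + R) n : 𝕜) * z ^ n)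
      (∏ i ∈ Finset.range R, (1 + z ^ (s + 1) * z ^ i)) := by
  induction R with
  | zero =>
    rw [Finset.prod_range_zero]
    have hfun : ∀ n : ℕ, (cD s (s + 0) n : 𝕜) * z ^ n = if n = 0 then 1 else 0 := by
      intro n
      rcases Nat.eq_zero_or_pos n with rfl | hn
      · simp [cD_zero]
      · rw [cD_empty s (s + 0) n (by omega) hn, if_neg (by omega)]
        simp
    have heq : (fun n : ℕ => (cD s (s + 0) n : 𝕜) * z ^ n)
        = fun n => if n = 0 then 1 else 0 := funext hfun
    rw [heq]
    exact hasSum_ite_eq 0 1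
  | succ R ih =>
    show HasSum (fun n => (cD s (s + R + 1) n : 𝕜) * z ^ n) _
    have hsummable : Summable (fun n => (cD s (s + R + 1) n : 𝕜) * z ^ n) := summable_cD hz
    have hshift : Summable (fun n : ℕ =>
        ((if s + R + 1 ≤ n then cD s (s + R) (n - (s + R + 1)) else 0 : ℕ) : 𝕜) * z ^ n) := by
      rw [← summable_nat_add_iff (s + R + 1)]
      apply Summable.congr ((summable_cD (s := s) (J := s + R) (z := z) hz).mul_right
        (z ^ (s + R + 1)))
      intro n
      rw [if_pos (by omega)]
      have h2 : n + (s + R + 1) - (s + R + 1) = n := by omega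
      rw [h2]
      ring
    have hrec : ∀ n, (cD s (s + R + 1) n : 𝕜) * z ^ n =
        (cD s (s + R) n : 𝕜) * z ^ n +
          ((if s + R + 1 ≤ n then cD s (s + R) (n - (s + R + 1)) else 0 : ℕ) : 𝕜) * z ^ n := by
      intro n
      rw [cD_succ s (s + R) n (by omega)]
      push_cast [Nat.cast_ite]
      ring
    have hsum_shift : ∑' n,
        ((if s + R + 1 ≤ n then cD s (s + R) (n - (s + R + 1)) else 0 : ℕ) : 𝕜) * z ^ n
        = z ^ (s + R + 1) * ∏ i ∈ Finset.range R, (1 + z ^ (s + 1) * z ^ i) := by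
      rw [tsum_shift (c := s + R + 1) hshift (fun n hn => by rw [if_neg (by omega)]; simp)]
      have hcong : ∀ n : ℕ,
          ((if s + R + 1 ≤ n + (s + R + 1) then cD s (s + R) (n + (s + R + 1) - (s + R + 1))
            else 0 : ℕ) : 𝕜) * z ^ (n + (s + R + 1))
          = z ^ (s + R + 1) * ((cD s (s + R) n : 𝕜) * z ^ n) := by
        intro n
        rw [if_pos (by omega)]
        have h2 : n + (s + R + 1) - (s + R + 1) = n := by omega
        rw [h2, pow_add]
        ring
      rw [tsum_congr hcong, (summable_cD hz).tsum_mul_left, ih.tsum_eq]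
    have hzsc : z ^ (s + 1) * z ^ R = z ^ (s + R + 1) := by
      rw [← pow_add]; congr 1; omega
    have hGval : ∑' n, (cD s (s + R + 1) n : 𝕜) * z ^ n
        = ∏ i ∈ Finset.range (R + 1), (1 + z ^ (s + 1) * z ^ i) := by
      rw [tsum_congr hrec, Summable.tsum_add (summable_cD hz) hshift, ih.tsum_eq, hsum_shift,
        Finset.prod_range_succ, hzsc]
      ring
    exact hGval ▸ hsummable.hasSum

end SptbarProof
namespace SptbarProof

open Finset Filter

/-! ### Real bounds -/

lemma factor_inv_le {x : ℝ} (hx0 : 0 ≤ x) (hx : x < 1) (s i : ℕ) :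
    (1 - x ^ (s + 1) * x ^ i)⁻¹ ≤ Real.exp (x ^ (i + 1) / (1 - x)) := by
  have ht : x ^ (s + 1) * x ^ i = x ^ (s + 1 + i) := by rw [← pow_add]
  have ht0 : 0 ≤ x ^ (s + 1) * x ^ i := by positivity
  have htu : x ^ (s + 1) * x ^ i ≤ x ^ (i + 1) := by
    rw [ht]; exact pow_le_pow_of_le_one hx0 hx.le (by omega)
  have hux : x ^ (i + 1) ≤ x := by
    calc x ^ (i + 1) ≤ x ^ 1 := pow_le_pow_of_le_one hx0 hx.le (by omega)
      _ = x := pow_one x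
  have h1 : (0 : ℝ) < 1 - x ^ (s + 1) * x ^ i := by nlinarith
  have hx1 : (0 : ℝ) < 1 - x := by linarith
  rw [← Real.exp_log (inv_pos.2 h1)]
  apply Real.exp_le_exp.2
  have hlog := Real.log_le_sub_one_of_pos (inv_pos.2 h1)
  have hmono : (1 - x ^ (s + 1) * x ^ i)⁻¹ ≤ (1 - x)⁻¹ :=
    inv_anti₀ hx1 (by linarith)
  have hsub : (1 - x ^ (s + 1) * x ^ i)⁻¹ - 1
      = (x ^ (s + 1) * x ^ i) * (1 - x ^ (s + 1) * x ^ i)⁻¹ := by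
    field_simp
    ring
  have hfin : (x ^ (s + 1) * x ^ i) * (1 - x ^ (s + 1) * x ^ i)⁻¹
      ≤ x ^ (i + 1) * (1 - x)⁻¹ :=
    mul_le_mul htu hmono (by positivity) (by positivity)
  rw [div_eq_mul_inv]
  linarith

lemma sum_pow_succ_le {x : ℝ} (hx0 : 0 ≤ x) (hx : x < 1) (R : ℕ) :
    ∑ i ∈ Finset.range R, x ^ (i + 1) ≤ x / (1 - x) := by
  have h1 : ∑ i ∈ Finset.range R, x ^ (i + 1) = x * ∑ i ∈ Finset.range R, x ^ i := by
    rw [Finset.mul_sum]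
    exact Finset.sum_congr rfl fun i _ => by rw [pow_succ]; ring
  have h2 : ∑ i ∈ Finset.range R, x ^ i ≤ (1 - x)⁻¹ := by
    calc ∑ i ∈ Finset.range R, x ^ i ≤ ∑' i, x ^ i :=
          Summable.sum_le_tsum _ (fun i _ => by positivity) (summable_geometric_of_lt_one hx0 hx)
      _ = (1 - x)⁻¹ := tsum_geometric_of_lt_one hx0 hx
  rw [h1, div_eq_mul_inv]
  exact mul_le_mul_of_nonneg_left h2 hx0

lemma prod_inv_le {x : ℝ} (hx0 : 0 ≤ x) (hx : x < 1) (s R : ℕ) :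
    ∏ i ∈ Finset.range R, (1 - x ^ (s + 1) * x ^ i)⁻¹ ≤ Real.exp (x / (1 - x) ^ 2) := by
  have hx1 : (0 : ℝ) < 1 - x := by linarith
  calc ∏ i ∈ Finset.range R, (1 - x ^ (s + 1) * x ^ i)⁻¹
      ≤ ∏ i ∈ Finset.range R, Real.exp (x ^ (i + 1) / (1 - x)) := by
        apply Finset.prod_le_prod
        · intro i _
          have ht : x ^ (s + 1) * x ^ i = x ^ (s + 1 + i) := by rw [← pow_add]
          have htu : x ^ (s + 1 + i) ≤ x := by
            calc x ^ (s + 1 + i) ≤ x ^ 1 := pow_le_pow_of_le_one hx0 hx.le (by omega)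
              _ = x := pow_one x
          have : (0 : ℝ) < 1 - x ^ (s + 1) * x ^ i := by rw [ht]; nlinarith [pow_nonneg hx0 (s+1+i)]
          positivity
        · intro i _
          exact factor_inv_le hx0 hx s i
    _ = Real.exp (∑ i ∈ Finset.range R, x ^ (i + 1) / (1 - x)) := (Real.exp_sum _ _).symm
    _ ≤ Real.exp (x / (1 - x) ^ 2) := by
        apply Real.exp_le_exp.2
        rw [← Finset.sum_div]
        rw [div_le_div_iff₀ hx1 (by positivity)]
        have := sum_pow_succ_le hx0 hx R
        have h3 : (x / (1 - x)) * (1 - x) = x := by field_simp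
        calc (∑ i ∈ Finset.range R, x ^ (i + 1)) * (1 - x) ^ 2
            ≤ (x / (1 - x)) * (1 - x) ^ 2 := by nlinarith [sq_nonneg (1 - x)]
          _ = x * (1 - x) := by field_simp
    
lemma prod_d_le {x : ℝ} (hx0 : 0 ≤ x) (hx : x < 1) (s R : ℕ) :
    ∏ i ∈ Finset.range R, (1 + x ^ (s + 1) * x ^ i) ≤ Real.exp (x / (1 - x)) := by
  calc ∏ i ∈ Finset.range R, (1 + x ^ (s + 1) * x ^ i)
      ≤ ∏ i ∈ Finset.range R, Real.exp (x ^ (i + 1)) := by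
        apply Finset.prod_le_prod
        · intro i _; positivity
        · intro i _
          have ht : x ^ (s + 1) * x ^ i = x ^ (s + 1 + i) := by rw [← pow_add]
          have htu : x ^ (s + 1 + i) ≤ x ^ (i + 1) := pow_le_pow_of_le_one hx0 hx.le (by omega)
          calc 1 + x ^ (s + 1) * x ^ i ≤ 1 + x ^ (i + 1) := by rw [ht]; linarith
            _ ≤ Real.exp (x ^ (i + 1)) := by
              have := Real.add_one_le_exp (x ^ (i + 1)); linarith
    _ = Real.exp (∑ i ∈ Finset.range R, x ^ (i + 1)) := (Real.exp_sum _ _).symm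
    _ ≤ Real.exp (x / (1 - x)) := Real.exp_le_exp.2 (sum_pow_succ_le hx0 hx R)

/-! ### Summability of the unbounded counts -/

lemma sum_range_cPi_le {x : ℝ} (hx0 : 0 ≤ x) (hx : x < 1) (s M : ℕ) :
    ∑ n ∈ Finset.range M, (cPi s n : ℝ) * x ^ n ≤ Real.exp (x / (1 - x) ^ 2) := by
  have hxnorm : ‖x‖ < 1 := by rwa [Real.norm_eq_abs, abs_of_nonneg hx0]
  have hcong : ∀ n ∈ Finset.range M, (cPi s n : ℝ) * x ^ n = (cP s (s + M) n : ℝ) * x ^ n := by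
    intro n hn
    rw [cPi_eq s n (s + M) (by have := Finset.mem_range.1 hn; omega)]
  rw [Finset.sum_congr rfl hcong]
  calc ∑ n ∈ Finset.range M, (cP s (s + M) n : ℝ) * x ^ n
      ≤ ∑' n, (cP s (s + M) n : ℝ) * x ^ n :=
        Summable.sum_le_tsum _ (fun n _ => by positivity) (summable_cP hxnorm)
    _ = ∏ i ∈ Finset.range M, (1 - x ^ (s + 1) * x ^ i)⁻¹ := (hasSum_cP_bounded s M hxnorm).tsum_eq
    _ ≤ Real.exp (x / (1 - x) ^ 2) := prod_inv_le hx0 hx s M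

lemma sum_range_cDi_le {x : ℝ} (hx0 : 0 ≤ x) (hx : x < 1) (s M : ℕ) :
    ∑ n ∈ Finset.range M, (cDi s n : ℝ) * x ^ n ≤ Real.exp (x / (1 - x)) := by
  have hxnorm : ‖x‖ < 1 := by rwa [Real.norm_eq_abs, abs_of_nonneg hx0]
  have hcong : ∀ n ∈ Finset.range M, (cDi s n : ℝ) * x ^ n = (cD s (s + M) n : ℝ) * x ^ n := by
    intro n hn
    rw [cDi_eq s n (s + M) (by have := Finset.mem_range.1 hn; omega)]
  rw [Finset.sum_congr rfl hcong]
  calc ∑ n ∈ Finset.range M, (cD s (s + M) n : ℝ) * x ^ n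
      ≤ ∑' n, (cD s (s + M) n : ℝ) * x ^ n :=
        Summable.sum_le_tsum _ (fun n _ => by positivity) (summable_cD hxnorm)
    _ = ∏ i ∈ Finset.range M, (1 + x ^ (s + 1) * x ^ i) := (hasSum_cD_bounded s M hxnorm).tsum_eq
    _ ≤ Real.exp (x / (1 - x)) := prod_d_le hx0 hx s M

lemma summable_cPi_real {x : ℝ} (hx0 : 0 ≤ x) (hx : x < 1) (s : ℕ) :
    Summable (fun n => (cPi s n : ℝ) * x ^ n) :=
  summable_of_sum_range_le (fun n => by positivity) (fun M => sum_range_cPi_le hx0 hx s M)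

lemma summable_cDi_real {x : ℝ} (hx0 : 0 ≤ x) (hx : x < 1) (s : ℕ) :
    Summable (fun n => (cDi s n : ℝ) * x ^ n) :=
  summable_of_sum_range_le (fun n => by positivity) (fun M => sum_range_cDi_le hx0 hx s M)

lemma tsum_cPi_le {x : ℝ} (hx0 : 0 ≤ x) (hx : x < 1) (s : ℕ) :
    ∑' n, (cPi s n : ℝ) * x ^ n ≤ Real.exp (x / (1 - x) ^ 2) :=
  Summable.tsum_le_of_sum_range_le (summable_cPi_real hx0 hx s) (fun M => sum_range_cPi_le hx0 hx s M)

lemma tsum_cDi_le {x : ℝ} (hx0 : 0 ≤ x) (hx : x < 1) (s : ℕ) :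
    ∑' n, (cDi s n : ℝ) * x ^ n ≤ Real.exp (x / (1 - x)) :=
  Summable.tsum_le_of_sum_range_le (summable_cDi_real hx0 hx s) (fun M => sum_range_cDi_le hx0 hx s M)

variable {𝕜 : Type*} [RCLike 𝕜]

lemma summable_cPi {s : ℕ} {z : 𝕜} (hz : ‖z‖ < 1) :
    Summable (fun n => (cPi s n : 𝕜) * z ^ n) := by
  apply Summable.of_norm
  apply Summable.congr (summable_cPi_real (norm_nonneg z) hz s)
  intro n
  rw [norm_mul, norm_pow, RCLike.norm_natCast]

lemma summable_cDi {s : ℕ} {z : 𝕜} (hz : ‖z‖ < 1) :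
    Summable (fun n => (cDi s n : 𝕜) * z ^ n) := by
  apply Summable.of_norm
  apply Summable.congr (summable_cDi_real (norm_nonneg z) hz s)
  intro n
  rw [norm_mul, norm_pow, RCLike.norm_natCast]

/-! ### Cauchy product for cN (generic) -/

lemma hasSum_cN_generic (s : ℕ) {z : 𝕜} (hz : ‖z‖ < 1) :
    HasSum (fun n => (cN s n : 𝕜) * z ^ n)
      ((∑' n, (cPi s n : 𝕜) * z ^ n) * (∑' n, (cDi s n : 𝕜) * z ^ n)) := by
  have hfn : Summable (fun n => ‖(cPi s n : 𝕜) * z ^ n‖) := by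
    apply Summable.congr (summable_cPi_real (norm_nonneg z) hz s)
    intro n
    rw [norm_mul, norm_pow, RCLike.norm_natCast]
  have hgn : Summable (fun n => ‖(cDi s n : 𝕜) * z ^ n‖) := by
    apply Summable.congr (summable_cDi_real (norm_nonneg z) hz s)
    intro n
    rw [norm_mul, norm_pow, RCLike.norm_natCast]
  have hcauchy := tsum_mul_tsum_eq_tsum_sum_antidiagonal_of_summable_norm hfn hgn
  have hsummable := (summable_norm_sum_mul_antidiagonal_of_summable_norm hfn hgn).of_norm
  have hcong : ∀ n, (∑ p ∈ antidiagonal n, ((cPi s p.1 : 𝕜) * z ^ p.1) *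
      ((cDi s p.2 : 𝕜) * z ^ p.2)) = (cN s n : 𝕜) * z ^ n := by
    intro n
    have h1 : ∀ p ∈ antidiagonal n, ((cPi s p.1 : 𝕜) * z ^ p.1) * ((cDi s p.2 : 𝕜) * z ^ p.2)
        = ((cPi s p.1 * cDi s p.2 : ℕ) : 𝕜) * z ^ n := by
      intro p hp
      have hpn : p.1 + p.2 = n := mem_antidiagonal.1 hp
      rw [← hpn, pow_add]
      push_cast
      ring
    rw [Finset.sum_congr rfl h1, ← Finset.sum_mul, cN_eq]
    push_cast
    ring
  have hs2 : Summable (fun n => (cN s n : 𝕜) * z ^ n) := hsummable.congr hcong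
  have : (∑' n, (cPi s n : 𝕜) * z ^ n) * (∑' n, (cDi s n : 𝕜) * z ^ n)
      = ∑' n, (cN s n : 𝕜) * z ^ n := by
    rw [hcauchy]
    exact tsum_congr hcong
  rw [this]
  exact hs2.hasSum

lemma summable_cN {s : ℕ} {z : 𝕜} (hz : ‖z‖ < 1) :
    Summable (fun n => (cN s n : 𝕜) * z ^ n) := (hasSum_cN_generic s hz).summable

lemma tsum_cN_le {x : ℝ} (hx0 : 0 ≤ x) (hx : x < 1) (s : ℕ) :
    ∑' n, (cN s n : ℝ) * x ^ n ≤ Real.exp (x / (1 - x) ^ 2) * Real.exp (x / (1 - x)) := by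
  have hxn : ‖x‖ < 1 := by rwa [Real.norm_eq_abs, abs_of_nonneg hx0]
  rw [(hasSum_cN_generic s hxn).tsum_eq]
  apply mul_le_mul (tsum_cPi_le hx0 hx s) (tsum_cDi_le hx0 hx s)
    (tsum_nonneg (fun n => by positivity)) (le_of_lt (Real.exp_pos _))

end SptbarProof
namespace SptbarProof

open Finset Filter Topology

/-! ### qPochInf via exp/log -/

lemma one_sub_ne_zero' {a z : ℂ} (ha : ‖a‖ < 1) (hz : ‖z‖ ≤ 1) (j : ℕ) : 1 - a * z ^ j ≠ 0 := by
  intro h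
  have h1 : a * z ^ j = 1 := by linear_combination -h
  have h2 : ‖a * z ^ j‖ < 1 := by
    rw [norm_mul, norm_pow]
    calc ‖a‖ * ‖z‖ ^ j ≤ ‖a‖ * 1 :=
          mul_le_mul_of_nonneg_left (pow_le_one₀ (norm_nonneg z) hz) (norm_nonneg a)
      _ = ‖a‖ := mul_one _
      _ < 1 := ha
  rw [h1] at h2
  simp at h2

lemma summable_log' {a z : ℂ} (hz : ‖z‖ < 1) (ha : ‖a‖ ≤ 1) :
    Summable (fun j => Complex.log (1 - a * z ^ j)) := by
  apply Summable.of_norm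
  apply Summable.of_norm_bounded_eventually (g := fun j => 3 / 2 * ‖z‖ ^ j)
    (Summable.mul_left _ (summable_geometric_of_lt_one (norm_nonneg z) hz))
  rw [Nat.cofinite_eq_atTop]
  have hev : ∀ᶠ j : ℕ in atTop, ‖z‖ ^ j ≤ 1 / 2 := by
    have h := tendsto_pow_atTop_nhds_zero_of_lt_one (norm_nonneg z) hz
    exact h.eventually (eventually_le_nhds (by norm_num))
  filter_upwards [hev] with j hj
  rw [norm_norm]
  have hw : ‖-(a * z ^ j)‖ ≤ 1 / 2 := by
    rw [norm_neg, norm_mul, norm_pow]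
    calc ‖a‖ * ‖z‖ ^ j ≤ 1 * ‖z‖ ^ j :=
          mul_le_mul_of_nonneg_right ha (by positivity)
      _ = ‖z‖ ^ j := one_mul _
      _ ≤ 1 / 2 := hj
  have hlog := Complex.norm_log_one_add_half_le_self hw
  rw [show (1 : ℂ) + -(a * z ^ j) = 1 - a * z ^ j by ring] at hlog
  calc ‖Complex.log (1 - a * z ^ j)‖ ≤ 3 / 2 * ‖-(a * z ^ j)‖ := hlog
    _ ≤ 3 / 2 * ‖z‖ ^ j := by
        rw [norm_neg, norm_mul, norm_pow]
        have : ‖a‖ * ‖z‖ ^ j ≤ ‖z‖ ^ j := by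
          calc ‖a‖ * ‖z‖ ^ j ≤ 1 * ‖z‖ ^ j := mul_le_mul_of_nonneg_right ha (by positivity)
            _ = ‖z‖ ^ j := one_mul _
        linarith

lemma qPochInf_eq_exp {a z : ℂ} (hz : ‖z‖ < 1) (ha : ‖a‖ < 1) :
    qPochInf a z = Complex.exp (∑' j, Complex.log (1 - a * z ^ j)) := by
  have h2 : Complex.exp (∑' j, Complex.log (1 - a * z ^ j)) = ∏' j : ℕ, (1 - a * z ^ j) :=
    Complex.cexp_tsum_eq_tprod (fun j => one_sub_ne_zero' ha hz.le j) (summable_log' hz ha.le)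
  rw [qPochInf, ← h2]

lemma qPochInf_ne_zero {a z : ℂ} (hz : ‖z‖ < 1) (ha : ‖a‖ < 1) : qPochInf a z ≠ 0 := by
  rw [qPochInf_eq_exp hz ha]
  exact Complex.exp_ne_zero _

lemma tendsto_prod_qPochInf {a z : ℂ} (hz : ‖z‖ < 1) (ha : ‖a‖ < 1) :
    Tendsto (fun R => ∏ i ∈ Finset.range R, (1 - a * z ^ i)) atTop (𝓝 (qPochInf a z)) := by
  have hprod : ∀ R, ∏ i ∈ Finset.range R, (1 - a * z ^ i)
      = Complex.exp (∑ i ∈ Finset.range R, Complex.log (1 - a * z ^ i)) := by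
    intro R
    rw [Complex.exp_sum]
    exact Finset.prod_congr rfl fun i _ => (Complex.exp_log (one_sub_ne_zero' ha hz.le i)).symm
  have hsum := (summable_log' hz ha.le).hasSum.tendsto_sum_nat
  have hcomp := (Complex.continuous_exp.tendsto _).comp hsum
  rw [qPochInf_eq_exp hz ha]
  exact Tendsto.congr (fun R => (hprod R).symm) hcomp

/-! ### HasSum for unbounded counts over ℂ -/

lemma norm_pow_succ_lt {z : ℂ} (hz : ‖z‖ < 1) (s : ℕ) : ‖z ^ (s + 1)‖ < 1 := by
  rw [norm_pow]
  calc ‖z‖ ^ (s + 1) ≤ ‖z‖ ^ 1 := pow_le_pow_of_le_one (norm_nonneg z) hz.le (by omega)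
    _ = ‖z‖ := pow_one _
    _ < 1 := hz

lemma hasSum_cPi_c (s : ℕ) {z : ℂ} (hz : ‖z‖ < 1) :
    HasSum (fun n => (cPi s n : ℂ) * z ^ n) (qPochInf (z ^ (s + 1)) z)⁻¹ := by
  have ha := norm_pow_succ_lt hz s
  have hsummable : Summable (fun n => (cPi s n : ℂ) * z ^ n) := summable_cPi hz
  have hA : ∀ R : ℕ, ∑' n, (cP s (s + R) n : ℂ) * z ^ n
      = (∏ i ∈ Finset.range R, (1 - z ^ (s + 1) * z ^ i))⁻¹ := by
    intro R
    rw [(hasSum_cP_bounded s R hz).tsum_eq, ← Finset.prod_inv_distrib]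
  have htendA : Tendsto (fun R => ∑' n, (cP s (s + R) n : ℂ) * z ^ n) atTop
      (𝓝 (qPochInf (z ^ (s + 1)) z)⁻¹) :=
    Tendsto.congr (fun R => (hA R).symm)
      ((tendsto_prod_qPochInf hz ha).inv₀ (qPochInf_ne_zero hz ha))
  have hx : ‖z‖ < 1 := hz
  have hsumPiR : Summable (fun n => (cPi s n : ℝ) * ‖z‖ ^ n) :=
    summable_cPi_real (norm_nonneg z) hz s
  have hdiff : ∀ R : ℕ, ‖(∑' n, (cPi s n : ℂ) * z ^ n) - ∑' n, (cP s (s + R) n : ℂ) * z ^ n‖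
      ≤ ∑' m, (cPi s (m + R) : ℝ) * ‖z‖ ^ (m + R) := by
    intro R
    rw [← Summable.tsum_sub hsummable (summable_cP hz)]
    have hterm : ∀ n, (cPi s n : ℂ) * z ^ n - (cP s (s + R) n : ℂ) * z ^ n
        = ((cPi s n - cP s (s + R) n : ℕ) : ℂ) * z ^ n := by
      intro n
      rw [Nat.cast_sub (cP_le_cPi s (s + R) n)]
      ring
    rw [tsum_congr hterm]
    have hnorm_sum : Summable (fun n => ‖((cPi s n - cP s (s + R) n : ℕ) : ℂ) * z ^ n‖) := by
      apply Summable.of_nonneg_of_le (fun n => norm_nonneg _) _ hsumPiR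
      intro n
      rw [norm_mul, norm_pow, Complex.norm_natCast]
      apply mul_le_mul_of_nonneg_right _ (by positivity)
      exact_mod_cast Nat.sub_le _ _
    calc ‖∑' n, ((cPi s n - cP s (s + R) n : ℕ) : ℂ) * z ^ n‖
        ≤ ∑' n, ‖((cPi s n - cP s (s + R) n : ℕ) : ℂ) * z ^ n‖ :=
          norm_tsum_le_tsum_norm hnorm_sum
      _ ≤ ∑' n, (if n < R then 0 else (cPi s n : ℝ) * ‖z‖ ^ n) := by
          apply Summable.tsum_le_tsum _ hnorm_sum
          · exact hsumPiR.summable_of_eq_zero_or_self (fun n => by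
              by_cases h : n < R
              · exact Or.inl (if_pos h)
              · exact Or.inr (if_neg h))
          · intro n
            rw [norm_mul, norm_pow, Complex.norm_natCast]
            by_cases hn : n < R
            · rw [if_pos hn]
              have heq : cPi s n = cP s (s + R) n := cPi_eq s n (s + R) (by omega)
              rw [heq, Nat.sub_self]
              simp
            · rw [if_neg hn]
              apply mul_le_mul_of_nonneg_right _ (by positivity)
              exact_mod_cast Nat.sub_le _ _
      _ = ∑' m, (cPi s (m + R) : ℝ) * ‖z‖ ^ (m + R) := by
          rw [tsum_shift (c := R) _ (fun n hn => by rw [if_pos hn])]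
          · apply tsum_congr
            intro m
            rw [if_neg (by omega)]
          · exact hsumPiR.summable_of_eq_zero_or_self (fun n => by
              by_cases h : n < R
              · exact Or.inl (if_pos h)
              · exact Or.inr (if_neg h))
  have htail : Tendsto (fun R => ∑' m, (cPi s (m + R) : ℝ) * ‖z‖ ^ (m + R)) atTop (𝓝 0) :=
    tendsto_sum_nat_add (fun n => (cPi s n : ℝ) * ‖z‖ ^ n)
  have hzero : Tendsto (fun R => (∑' n, (cPi s n : ℂ) * z ^ n)
      - ∑' n, (cP s (s + R) n : ℂ) * z ^ n) atTop (𝓝 0) :=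
    squeeze_zero_norm hdiff htail
  have hcomb : Tendsto (fun R => ((∑' n, (cPi s n : ℂ) * z ^ n)
      - ∑' n, (cP s (s + R) n : ℂ) * z ^ n) + ∑' n, (cP s (s + R) n : ℂ) * z ^ n) atTop
      (𝓝 (0 + (qPochInf (z ^ (s + 1)) z)⁻¹)) := hzero.add htendA
  have hconst : Tendsto (fun _ : ℕ => ∑' n, (cPi s n : ℂ) * z ^ n) atTop
      (𝓝 (0 + (qPochInf (z ^ (s + 1)) z)⁻¹)) :=
    hcomb.congr (fun R => by ring)
  have hval : ∑' n, (cPi s n : ℂ) * z ^ n = (qPochInf (z ^ (s + 1)) z)⁻¹ := by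
    have := tendsto_nhds_unique tendsto_const_nhds hconst
    rwa [zero_add] at this
  exact (Summable.hasSum_iff hsummable).2 hval

lemma hasSum_cDi_c (s : ℕ) {z : ℂ} (hz : ‖z‖ < 1) :
    HasSum (fun n => (cDi s n : ℂ) * z ^ n) (qPochInf (-(z ^ (s + 1))) z) := by
  have ha : ‖-(z ^ (s + 1))‖ < 1 := by rw [norm_neg]; exact norm_pow_succ_lt hz s
  have hsummable : Summable (fun n => (cDi s n : ℂ) * z ^ n) := summable_cDi hz
  have hA : ∀ R : ℕ, ∑' n, (cD s (s + R) n : ℂ) * z ^ n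
      = ∏ i ∈ Finset.range R, (1 - -(z ^ (s + 1)) * z ^ i) := by
    intro R
    rw [(hasSum_cD_bounded s R hz).tsum_eq]
    exact Finset.prod_congr rfl fun i _ => by ring
  have htendA : Tendsto (fun R => ∑' n, (cD s (s + R) n : ℂ) * z ^ n) atTop
      (𝓝 (qPochInf (-(z ^ (s + 1))) z)) :=
    Tendsto.congr (fun R => (hA R).symm) (tendsto_prod_qPochInf hz ha)
  have hsumDiR : Summable (fun n => (cDi s n : ℝ) * ‖z‖ ^ n) :=
    summable_cDi_real (norm_nonneg z) hz s
  have hdiff : ∀ R : ℕ, ‖(∑' n, (cDi s n : ℂ) * z ^ n) - ∑' n, (cD s (s + R) n : ℂ) * z ^ n‖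
      ≤ ∑' m, (cDi s (m + R) : ℝ) * ‖z‖ ^ (m + R) := by
    intro R
    rw [← Summable.tsum_sub hsummable (summable_cD hz)]
    have hterm : ∀ n, (cDi s n : ℂ) * z ^ n - (cD s (s + R) n : ℂ) * z ^ n
        = ((cDi s n - cD s (s + R) n : ℕ) : ℂ) * z ^ n := by
      intro n
      rw [Nat.cast_sub (cD_le_cDi s (s + R) n)]
      ring
    rw [tsum_congr hterm]
    have hnorm_sum : Summable (fun n => ‖((cDi s n - cD s (s + R) n : ℕ) : ℂ) * z ^ n‖) := by
      apply Summable.of_nonneg_of_le (fun n => norm_nonneg _) _ hsumDiR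
      intro n
      rw [norm_mul, norm_pow, Complex.norm_natCast]
      apply mul_le_mul_of_nonneg_right _ (by positivity)
      exact_mod_cast Nat.sub_le _ _
    calc ‖∑' n, ((cDi s n - cD s (s + R) n : ℕ) : ℂ) * z ^ n‖
        ≤ ∑' n, ‖((cDi s n - cD s (s + R) n : ℕ) : ℂ) * z ^ n‖ :=
          norm_tsum_le_tsum_norm hnorm_sum
      _ ≤ ∑' n, (if n < R then 0 else (cDi s n : ℝ) * ‖z‖ ^ n) := by
          apply Summable.tsum_le_tsum _ hnorm_sum
          · exact hsumDiR.summable_of_eq_zero_or_self (fun n => by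
              by_cases h : n < R
              · exact Or.inl (if_pos h)
              · exact Or.inr (if_neg h))
          · intro n
            rw [norm_mul, norm_pow, Complex.norm_natCast]
            by_cases hn : n < R
            · rw [if_pos hn]
              have heq : cDi s n = cD s (s + R) n := cDi_eq s n (s + R) (by omega)
              rw [heq, Nat.sub_self]
              simp
            · rw [if_neg hn]
              apply mul_le_mul_of_nonneg_right _ (by positivity)
              exact_mod_cast Nat.sub_le _ _
      _ = ∑' m, (cDi s (m + R) : ℝ) * ‖z‖ ^ (m + R) := by
          rw [tsum_shift (c := R) _ (fun n hn => by rw [if_pos hn])]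
          · apply tsum_congr
            intro m
            rw [if_neg (by omega)]
          · exact hsumDiR.summable_of_eq_zero_or_self (fun n => by
              by_cases h : n < R
              · exact Or.inl (if_pos h)
              · exact Or.inr (if_neg h))
  have htail : Tendsto (fun R => ∑' m, (cDi s (m + R) : ℝ) * ‖z‖ ^ (m + R)) atTop (𝓝 0) :=
    tendsto_sum_nat_add (fun n => (cDi s n : ℝ) * ‖z‖ ^ n)
  have hzero : Tendsto (fun R => (∑' n, (cDi s n : ℂ) * z ^ n)
      - ∑' n, (cD s (s + R) n : ℂ) * z ^ n) atTop (𝓝 0) :=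
    squeeze_zero_norm hdiff htail
  have hcomb : Tendsto (fun R => ((∑' n, (cDi s n : ℂ) * z ^ n)
      - ∑' n, (cD s (s + R) n : ℂ) * z ^ n) + ∑' n, (cD s (s + R) n : ℂ) * z ^ n) atTop
      (𝓝 (0 + qPochInf (-(z ^ (s + 1))) z)) := hzero.add htendA
  have hconst : Tendsto (fun _ : ℕ => ∑' n, (cDi s n : ℂ) * z ^ n) atTop
      (𝓝 (0 + qPochInf (-(z ^ (s + 1))) z)) :=
    hcomb.congr (fun R => by ring)
  have hval : ∑' n, (cDi s n : ℂ) * z ^ n = qPochInf (-(z ^ (s + 1))) z := by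
    have := tendsto_nhds_unique tendsto_const_nhds hconst
    rwa [zero_add] at this
  exact (Summable.hasSum_iff hsummable).2 hval

lemma hasSum_cN_c (s : ℕ) {z : ℂ} (hz : ‖z‖ < 1) :
    HasSum (fun n => (cN s n : ℂ) * z ^ n)
      (qPochInf (-(z ^ (s + 1))) z * (qPochInf (z ^ (s + 1)) z)⁻¹) := by
  have h := hasSum_cN_generic (𝕜 := ℂ) s hz
  rwa [(hasSum_cPi_c s hz).tsum_eq, (hasSum_cDi_c s hz).tsum_eq, mul_comm] at h

end SptbarProof
namespace SptbarProof

open Finset Filter Topology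

noncomputable def Tq (q : ℂ) (s : ℕ) : ℂ :=
  qPochInf (-(q ^ (s + 1))) q * (qPochInf (q ^ (s + 1)) q)⁻¹

lemma hasSum_Tq (s : ℕ) {q : ℂ} (hq : ‖q‖ < 1) :
    HasSum (fun n => (cN s n : ℂ) * q ^ n) (Tq q s) := hasSum_cN_c s hq

lemma norm_Tq_le {q : ℂ} (hq : ‖q‖ < 1) (s : ℕ) :
    ‖Tq q s‖ ≤ Real.exp (‖q‖ / (1 - ‖q‖) ^ 2) * Real.exp (‖q‖ / (1 - ‖q‖)) := by
  have h1 := (hasSum_Tq s hq).tsum_eq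
  have hnorm : Summable (fun n => ‖(cN s n : ℂ) * q ^ n‖) := by
    apply Summable.congr (summable_cN (𝕜 := ℝ) (s := s) (z := ‖q‖)
      (by rwa [Real.norm_eq_abs, abs_of_nonneg (norm_nonneg q)]))
    intro n
    rw [norm_mul, norm_pow, Complex.norm_natCast]
  calc ‖Tq q s‖ = ‖∑' n, (cN s n : ℂ) * q ^ n‖ := by rw [h1]
    _ ≤ ∑' n, ‖(cN s n : ℂ) * q ^ n‖ := norm_tsum_le_tsum_norm hnorm
    _ = ∑' n, (cN s n : ℝ) * ‖q‖ ^ n := by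
        apply tsum_congr
        intro n
        rw [norm_mul, norm_pow, Complex.norm_natCast]
    _ ≤ _ := tsum_cN_le (norm_nonneg q) hq s

section Fubini

variable {k : ℕ} {q : ℂ}

lemma summable_W (hk : 1 ≤ k) (hq : ‖q‖ < 1) :
    Summable (fun p : ℕ × ℕ => (cN (p.1 + 1) p.2 : ℂ) * q ^ (k * (p.1 + 1) + p.2)) := by
  set x := ‖q‖ with hx
  have hx0 : 0 ≤ x := norm_nonneg q
  have hxR : ‖x‖ < 1 := by rwa [Real.norm_eq_abs, abs_of_nonneg hx0]
  set C := Real.exp (x / (1 - x) ^ 2) * Real.exp (x / (1 - x)) with hC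
  apply Summable.of_norm
  have hnorm : ∀ p : ℕ × ℕ, ‖(cN (p.1 + 1) p.2 : ℂ) * q ^ (k * (p.1 + 1) + p.2)‖
      = (cN (p.1 + 1) p.2 : ℝ) * x ^ (k * (p.1 + 1) + p.2) := by
    intro p
    rw [norm_mul, norm_pow, Complex.norm_natCast]
  rw [funext hnorm]
  apply (summable_prod_of_nonneg (fun p => by positivity)).2
  constructor
  · intro t
    have h1 : Summable (fun m => (cN (t + 1) m : ℝ) * x ^ m) := summable_cN hxR
    apply Summable.congr (h1.mul_left (x ^ (k * (t + 1))))
    intro m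
    rw [pow_add]
    ring
  · have hbound : ∀ t : ℕ, ∑' m, (cN (t + 1) m : ℝ) * x ^ (k * (t + 1) + m) ≤ C * x ^ t := by
      intro t
      have h1 : Summable (fun m => (cN (t + 1) m : ℝ) * x ^ m) := summable_cN hxR
      have h2 : (fun m => (cN (t + 1) m : ℝ) * x ^ (k * (t + 1) + m))
          = fun m => x ^ (k * (t + 1)) * ((cN (t + 1) m : ℝ) * x ^ m) := by
        funext m
        rw [pow_add]
        ring
      rw [h2, h1.tsum_mul_left]
      have h3 : ∑' m, (cN (t + 1) m : ℝ) * x ^ m ≤ C := tsum_cN_le hx0 hq (t + 1)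
      have h4 : x ^ (k * (t + 1)) ≤ x ^ t :=
        pow_le_pow_of_le_one hx0 hq.le (by nlinarith)
      have h5 : (0 : ℝ) ≤ ∑' m, (cN (t + 1) m : ℝ) * x ^ m :=
        tsum_nonneg (fun m => by positivity)
      calc x ^ (k * (t + 1)) * ∑' m, (cN (t + 1) m : ℝ) * x ^ m
          ≤ x ^ t * C := mul_le_mul h4 h3 h5 (by positivity)
        _ = C * x ^ t := mul_comm _ _
    apply Summable.of_nonneg_of_le (fun t => tsum_nonneg (fun m => by positivity)) hbound
    exact (summable_geometric_of_lt_one hx0 hq).mul_left C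

lemma sptbar_zero (hk : 1 ≤ k) : sptbar k 0 = 0 := by
  rw [sptbar_card hk 0]
  haveI : IsEmpty (Fib k 0) := by
    constructor
    rintro ⟨⟨a, b⟩, h⟩
    simp only at h
    rcases Nat.eq_zero_of_add_eq_zero_right h with h1
    rcases Nat.mul_eq_zero.1 h1 with h2 | h2
    · omega
    · omega
  rw [Finset.univ_eq_empty, Finset.sum_empty]

lemma fib_heq {k n n' : ℕ} (h : n = n') (y : Fib k n) (y' : Fib k n')
    (h1 : y.1.1.val = y'.1.1.val) (h2 : y.1.2.val = y'.1.2.val) : HEq y y' := by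
  subst h
  apply heq_of_eq
  exact Subtype.ext (Prod.ext (Fin.ext h1) (Fin.ext h2))

def fibEquiv (k : ℕ) (hk : 1 ≤ k) : ℕ × ℕ ≃ ((n : ℕ) × Fib k n) where
  toFun := fun p => ⟨k * (p.1 + 1) + p.2,
    ⟨(⟨p.1, by have := Nat.le_mul_of_pos_left (p.1 + 1) (show 0 < k by omega); omega⟩,
      ⟨p.2, by omega⟩), rfl⟩⟩
  invFun := fun y => (y.2.1.1.val, y.2.1.2.val)
  left_inv := fun p => rfl
  right_inv := by
    rintro ⟨n, ⟨⟨⟨a, ha⟩, ⟨b, hb⟩⟩, hp⟩⟩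
    simp only at hp
    exact Sigma.ext hp (fib_heq hp _ _ rfl rfl)

lemma hasSum_sptbar (hk : 1 ≤ k) (hq : ‖q‖ < 1) :
    HasSum (fun n => (sptbar k n : ℂ) * q ^ n)
      (∑' t : ℕ, q ^ (k * (t + 1)) * Tq q (t + 1)) := by
  set W : ℕ × ℕ → ℂ := fun p => (cN (p.1 + 1) p.2 : ℂ) * q ^ (k * (p.1 + 1) + p.2) with hW
  have hWsummable : Summable W := summable_W hk hq
  -- first grouping: by columns
  have hcol : ∀ t : ℕ, HasSum (fun m => W (t, m)) (q ^ (k * (t + 1)) * Tq q (t + 1)) := by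
    intro t
    have h1 := (hasSum_Tq (t + 1) hq).mul_left (q ^ (k * (t + 1)))
    apply h1.congr_fun
    intro m
    simp only [hW]
    rw [pow_add]
    ring
  have htsum_col : ∑' p, W p = ∑' t, q ^ (k * (t + 1)) * Tq q (t + 1) := by
    rw [Summable.tsum_prod' hWsummable (fun t => (hcol t).summable)]
    exact tsum_congr fun t => (hcol t).tsum_eq
  -- second grouping: by total weight
  let e : ℕ × ℕ ≃ ((n : ℕ) × Fib k n) := fibEquiv k hk
  have hWe : HasSum (fun y : (n : ℕ) × Fib k n => W (e.symm y)) (∑' p, W p) := by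
    have h1 : HasSum W (∑' p, W p) := hWsummable.hasSum
    rw [← Equiv.hasSum_iff e]
    apply h1.congr_fun
    intro p
    simp
  have hfib : ∀ n : ℕ, HasSum (fun c : Fib k n => W (e.symm ⟨n, c⟩))
      (∑ c : Fib k n, W (e.symm ⟨n, c⟩)) := fun n => hasSum_fintype _
  have hsigma := hWe.sigma hfib
  have hfinal : ∀ n : ℕ, ∑ c : Fib k n, W (e.symm ⟨n, c⟩) = (sptbar k n : ℂ) * q ^ n := by
    intro n
    have h1 : ∀ c : Fib k n, W (e.symm ⟨n, c⟩)
        = (cN (c.1.1.val + 1) c.1.2.val : ℂ) * q ^ n := by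
      intro c
      have hc : k * (c.1.1.val + 1) + c.1.2.val = n := c.2
      calc W (e.symm ⟨n, c⟩)
          = (cN (c.1.1.val + 1) c.1.2.val : ℂ) * q ^ (k * (c.1.1.val + 1) + c.1.2.val) := rfl
        _ = (cN (c.1.1.val + 1) c.1.2.val : ℂ) * q ^ n := by rw [hc]
    rw [Finset.sum_congr rfl (fun c _ => h1 c), ← Finset.sum_mul, sptbar_card hk n]
    push_cast
    ring
  rw [htsum_col] at hsigma
  exact hsigma.congr_fun (fun n => (hfinal n).symm)

end Fubini

end SptbarProof
namespace SptbarProof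

open Finset Filter Topology

variable {q : ℂ}

noncomputable def lamq (q a : ℂ) : ℂ := ∑' j, Complex.log (1 - a * q ^ j)

noncomputable def Sq (q : ℂ) (m : ℕ) : ℂ := ∑' t : ℕ, q ^ (m * (t + 1)) * Tq q (t + 1)

lemma norm_qpow_lt (hq : ‖q‖ < 1) (s : ℕ) : ‖q ^ (s + 1)‖ < 1 := norm_pow_succ_lt hq s

lemma one_add_pow_ne_zero (hq : ‖q‖ < 1) (s : ℕ) : (1 : ℂ) + q ^ (s + 1) ≠ 0 := by
  intro h
  have h1 : q ^ (s + 1) = -1 := by linear_combination h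
  have := norm_qpow_lt hq s
  rw [h1] at this
  simp at this

lemma one_sub_pow_ne_zero (hq : ‖q‖ < 1) (s : ℕ) : (1 : ℂ) - q ^ (s + 1) ≠ 0 := by
  intro h
  have h1 : q ^ (s + 1) = 1 := by linear_combination -h
  have := norm_qpow_lt hq s
  rw [h1] at this
  simp at this

lemma Tq_exp (hq : ‖q‖ < 1) (s : ℕ) :
    Tq q s = Complex.exp (lamq q (-(q ^ (s + 1))) - lamq q (q ^ (s + 1))) := by
  have ha : ‖q ^ (s + 1)‖ < 1 := norm_qpow_lt hq s
  have ha' : ‖-(q ^ (s + 1))‖ < 1 := by rwa [norm_neg]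
  rw [Tq, qPochInf_eq_exp hq ha', qPochInf_eq_exp hq ha, Complex.exp_sub]
  rw [div_eq_mul_inv]
  rfl

lemma lam_rec (hq : ‖q‖ < 1) {a : ℂ} (ha : ‖a‖ < 1) :
    lamq q a = Complex.log (1 - a) + lamq q (a * q) := by
  rw [lamq, Summable.tsum_eq_zero_add (summable_log' hq ha.le)]
  have e0 : (1 : ℂ) - a * q ^ 0 = 1 - a := by rw [pow_zero, mul_one]
  rw [e0, lamq]
  congr 1
  exact tsum_congr (fun j => by rw [show a * q ^ (j + 1) = a * q * q ^ j by rw [pow_succ]; ring])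

lemma Trel (hq : ‖q‖ < 1) (s : ℕ) :
    (1 - q ^ (s + 1)) * Tq q s = (1 + q ^ (s + 1)) * Tq q (s + 1) := by
  have ha : ‖q ^ (s + 1)‖ < 1 := norm_qpow_lt hq s
  have ha' : ‖-(q ^ (s + 1))‖ < 1 := by rwa [norm_neg]
  have h1 : lamq q (-(q ^ (s + 1))) = Complex.log (1 + q ^ (s + 1))
      + lamq q (-(q ^ (s + 2))) := by
    rw [lam_rec hq ha']
    have e1 : (1 : ℂ) - -(q ^ (s + 1)) = 1 + q ^ (s + 1) := by ring
    have e2 : -(q ^ (s + 1)) * q = -(q ^ (s + 2)) := by rw [pow_succ]; ring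
    rw [e1, e2]
  have h2 : lamq q (q ^ (s + 1)) = Complex.log (1 - q ^ (s + 1)) + lamq q (q ^ (s + 2)) := by
    rw [lam_rec hq ha]
    have e1 : q ^ (s + 1) * q = q ^ (s + 2) := (pow_succ q (s + 1)).symm
    rw [e1]
  have hsplit : lamq q (-(q ^ (s + 1))) - lamq q (q ^ (s + 1))
      = (Complex.log (1 + q ^ (s + 1)) - Complex.log (1 - q ^ (s + 1)))
        + (lamq q (-(q ^ (s + 2))) - lamq q (q ^ (s + 2))) := by
    rw [h1, h2]; ring
  have e1 : Complex.exp (Complex.log (1 + q ^ (s + 1))) = 1 + q ^ (s + 1) :=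
    Complex.exp_log (one_add_pow_ne_zero hq s)
  have e2 : Complex.exp (Complex.log (1 - q ^ (s + 1))) = 1 - q ^ (s + 1) :=
    Complex.exp_log (one_sub_pow_ne_zero hq s)
  rw [Tq_exp hq s, Tq_exp hq (s + 1), hsplit, Complex.exp_add, Complex.exp_sub, e1, e2]
  have hne := one_add_pow_ne_zero hq s
  have hne2 := one_sub_pow_ne_zero hq s
  field_simp

lemma norm_lam_le (hq : ‖q‖ < 1) {a : ℂ} (ha : ‖a‖ ≤ 1 / 2) :
    ‖lamq q a‖ ≤ 3 / 2 * ‖a‖ * (1 - ‖q‖)⁻¹ := by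
  have ha1 : ‖a‖ < 1 := by linarith
  have hbound : ∀ j : ℕ, ‖Complex.log (1 - a * q ^ j)‖ ≤ 3 / 2 * ‖a‖ * ‖q‖ ^ j := by
    intro j
    have hw : ‖-(a * q ^ j)‖ ≤ 1 / 2 := by
      rw [norm_neg, norm_mul, norm_pow]
      calc ‖a‖ * ‖q‖ ^ j ≤ (1 / 2) * 1 :=
            mul_le_mul ha (pow_le_one₀ (norm_nonneg q) hq.le) (by positivity) (by norm_num)
        _ = 1 / 2 := by norm_num
    have hlog := Complex.norm_log_one_add_half_le_self hw
    rw [show (1 : ℂ) + -(a * q ^ j) = 1 - a * q ^ j by ring] at hlog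
    calc ‖Complex.log (1 - a * q ^ j)‖ ≤ 3 / 2 * ‖-(a * q ^ j)‖ := hlog
      _ = 3 / 2 * ‖a‖ * ‖q‖ ^ j := by rw [norm_neg, norm_mul, norm_pow]; ring
  have hsummable_norm : Summable (fun j => ‖Complex.log (1 - a * q ^ j)‖) := by
    apply Summable.of_nonneg_of_le (fun j => norm_nonneg _) hbound
    exact ((summable_geometric_of_lt_one (norm_nonneg q) hq).mul_left _)
  calc ‖lamq q a‖ ≤ ∑' j, ‖Complex.log (1 - a * q ^ j)‖ := norm_tsum_le_tsum_norm hsummable_norm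
    _ ≤ ∑' j : ℕ, 3 / 2 * ‖a‖ * ‖q‖ ^ j := by
        apply Summable.tsum_le_tsum hbound hsummable_norm
        exact (summable_geometric_of_lt_one (norm_nonneg q) hq).mul_left _
    _ = 3 / 2 * ‖a‖ * (1 - ‖q‖)⁻¹ := by
        rw [(summable_geometric_of_lt_one (norm_nonneg q) hq).tsum_mul_left,
          tsum_geometric_of_lt_one (norm_nonneg q) hq]

lemma tendsto_lam (hq : ‖q‖ < 1) (σ : ℂ) (hσ : ‖σ‖ = 1) :
    Tendsto (fun s => lamq q (σ * q ^ (s + 1))) atTop (𝓝 0) := by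
  have hg : Tendsto (fun s : ℕ => 3 / 2 * ‖q‖ ^ (s + 1) * (1 - ‖q‖)⁻¹) atTop (𝓝 0) := by
    have h1 : Tendsto (fun s : ℕ => ‖q‖ ^ (s + 1)) atTop (𝓝 0) :=
      (tendsto_pow_atTop_nhds_zero_of_lt_one (norm_nonneg q) hq).comp
        (tendsto_add_atTop_nat 1)
    have h2 := (h1.const_mul (3 / 2 : ℝ)).mul_const (1 - ‖q‖)⁻¹
    simpa using h2
  apply squeeze_zero_norm' _ hg
  have hev : ∀ᶠ s : ℕ in atTop, ‖q‖ ^ (s + 1) ≤ 1 / 2 := by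
    have h := tendsto_pow_atTop_nhds_zero_of_lt_one (norm_nonneg q) hq
    exact (h.comp (tendsto_add_atTop_nat 1)).eventually (eventually_le_nhds (by norm_num))
  filter_upwards [hev] with s hs
  have hnorm : ‖σ * q ^ (s + 1)‖ = ‖q‖ ^ (s + 1) := by
    rw [norm_mul, hσ, one_mul, norm_pow]
  have := norm_lam_le hq (a := σ * q ^ (s + 1)) (by rw [hnorm]; exact hs)
  rwa [hnorm] at this

lemma tendsto_Tq (hq : ‖q‖ < 1) : Tendsto (fun s => Tq q s) atTop (𝓝 1) := by
  have h1 : Tendsto (fun s : ℕ => lamq q (-(q ^ (s + 1)))) atTop (𝓝 0) := by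
    have h := tendsto_lam hq (-1) (by simp)
    apply h.congr
    intro s
    rw [neg_one_mul]
  have h2 : Tendsto (fun s : ℕ => lamq q (q ^ (s + 1))) atTop (𝓝 0) := by
    have h := tendsto_lam hq 1 (by simp)
    apply h.congr
    intro s
    rw [one_mul]
  have h3 := (h1.sub h2).cexp
  have h4 : Tendsto (fun s => Tq q s) atTop (𝓝 (Complex.exp (0 - 0))) :=
    h3.congr (fun s => (Tq_exp hq s).symm)
  simpa using h4

lemma summable_qT (hq : ‖q‖ < 1) (m : ℕ) (hm : 1 ≤ m) :
    Summable (fun t : ℕ => q ^ (m * (t + 1)) * Tq q (t + 1)) := by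
  have hb : ∀ t : ℕ, ‖q ^ (m * (t + 1)) * Tq q (t + 1)‖
      ≤ Real.exp (‖q‖ / (1 - ‖q‖) ^ 2) * Real.exp (‖q‖ / (1 - ‖q‖)) * ‖q‖ ^ t := by
    intro t
    rw [norm_mul, norm_pow]
    have h1 : ‖Tq q (t + 1)‖ ≤ Real.exp (‖q‖ / (1 - ‖q‖) ^ 2) * Real.exp (‖q‖ / (1 - ‖q‖)) :=
      norm_Tq_le hq (t + 1)
    have h2 : ‖q‖ ^ (m * (t + 1)) ≤ ‖q‖ ^ t :=
      pow_le_pow_of_le_one (norm_nonneg q) hq.le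
        (by have := Nat.le_mul_of_pos_left (t + 1) (show 0 < m by omega); omega)
    calc ‖q‖ ^ (m * (t + 1)) * ‖Tq q (t + 1)‖
        ≤ ‖q‖ ^ t * (Real.exp (‖q‖ / (1 - ‖q‖) ^ 2) * Real.exp (‖q‖ / (1 - ‖q‖))) :=
          mul_le_mul h2 h1 (norm_nonneg _) (by positivity)
      _ = Real.exp (‖q‖ / (1 - ‖q‖) ^ 2) * Real.exp (‖q‖ / (1 - ‖q‖)) * ‖q‖ ^ t := by ring
  exact Summable.of_norm (Summable.of_nonneg_of_le (fun t => norm_nonneg _) hb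
    ((summable_geometric_of_lt_one (norm_nonneg q) hq).mul_left _))

end SptbarProof
namespace SptbarProof

open Finset Filter Topology

variable {q : ℂ}

lemma term_eq (hq : ‖q‖ < 1) (j t : ℕ) :
    (1 + q ^ (j + 1)) * (q ^ ((j + 1) * (t + 1)) * Tq q (t + 1))
      - (q ^ j - 1) * (q ^ (j * (t + 1)) * Tq q (t + 1))
    = (q ^ ((j + 1) * (t + 1)) + q ^ (j * (t + 1))) * Tq q (t + 1)
      - (q ^ ((j + 1) * (t + 1 + 1)) + q ^ (j * (t + 1 + 1))) * Tq q (t + 1 + 1) := by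
  have hrel := Trel hq (t + 1)
  have hne := one_add_pow_ne_zero hq (t + 1)
  have e1 : q ^ ((j + 1) * (t + 1)) = (q ^ (t + 1)) ^ (j + 1) := by rw [mul_comm, pow_mul]
  have e2 : q ^ (j * (t + 1)) = (q ^ (t + 1)) ^ j := by rw [mul_comm, pow_mul]
  have e3 : q ^ ((j + 1) * (t + 1 + 1)) = (q ^ (t + 1 + 1)) ^ (j + 1) := by
    rw [mul_comm, pow_mul]
  have e4 : q ^ (j * (t + 1 + 1)) = (q ^ (t + 1 + 1)) ^ j := by rw [mul_comm, pow_mul]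
  have e5 : q ^ (t + 1 + 1) = q ^ (t + 1) * q := pow_succ q (t + 1)
  rw [e1, e2, e3, e4]
  apply mul_left_cancel₀ hne
  rw [e5] at hrel
  rw [e5]
  linear_combination (-((q ^ (t + 1) * q) ^ (j + 1) + (q ^ (t + 1) * q) ^ j)) * hrel

lemma summable_coeff (hq : ‖q‖ < 1) (j : ℕ) :
    Summable (fun t : ℕ => (q ^ j - 1) * (q ^ (j * (t + 1)) * Tq q (t + 1))) := by
  rcases Nat.eq_zero_or_pos j with rfl | hj
  · simp only [pow_zero, sub_self, zero_mul]
    exact summable_zero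
  · exact (summable_qT hq j hj).mul_left _

lemma tendsto_qpow (hq : ‖q‖ < 1) (m : ℕ) (hm : 1 ≤ m) :
    Tendsto (fun t : ℕ => q ^ (m * (t + 1))) atTop (𝓝 0) := by
  have hb : ∀ t : ℕ, ‖q ^ (m * (t + 1))‖ ≤ ‖q‖ ^ t := by
    intro t
    rw [norm_pow]
    exact pow_le_pow_of_le_one (norm_nonneg q) hq.le
      (by have := Nat.le_mul_of_pos_left (t + 1) (show 0 < m by omega); omega)
  exact squeeze_zero_norm hb (tendsto_pow_atTop_nhds_zero_of_lt_one (norm_nonneg q) hq)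

lemma tendsto_G (hq : ‖q‖ < 1) (j : ℕ) :
    Tendsto (fun t : ℕ => (q ^ ((j + 1) * (t + 1)) + q ^ (j * (t + 1))) * Tq q (t + 1)) atTop
      (𝓝 (if j = 0 then 1 else 0)) := by
  have hT : Tendsto (fun t : ℕ => Tq q (t + 1)) atTop (𝓝 1) :=
    (tendsto_Tq hq).comp (tendsto_add_atTop_nat 1)
  rcases Nat.eq_zero_or_pos j with rfl | hj
  · rw [if_pos rfl]
    have h1 := ((tendsto_qpow hq 1 le_rfl).add
      (tendsto_const_nhds : Tendsto (fun _ : ℕ => (1 : ℂ)) atTop (𝓝 1))).mul hT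
    have h2 : ((0 : ℂ) + 1) * 1 = 1 := by norm_num
    rw [h2] at h1
    apply h1.congr
    intro t
    simp
  · rw [if_neg (by omega)]
    have h1 := ((tendsto_qpow hq (j + 1) (by omega)).add (tendsto_qpow hq j hj)).mul hT
    have h2 : ((0 : ℂ) + 0) * 1 = 0 := by norm_num
    rwa [h2] at h1

lemma tsum_term (hq : ‖q‖ < 1) (j : ℕ) :
    (1 + q ^ (j + 1)) * Sq q (j + 1)
      - ∑' t : ℕ, (q ^ j - 1) * (q ^ (j * (t + 1)) * Tq q (t + 1))
    = (q ^ ((j + 1) * (0 + 1)) + q ^ (j * (0 + 1))) * Tq q (0 + 1)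
      - (if j = 0 then 1 else 0) := by
  set G : ℕ → ℂ := fun t => (q ^ ((j + 1) * (t + 1)) + q ^ (j * (t + 1))) * Tq q (t + 1)
    with hG
  set term : ℕ → ℂ := fun t => (1 + q ^ (j + 1)) * (q ^ ((j + 1) * (t + 1)) * Tq q (t + 1))
      - (q ^ j - 1) * (q ^ (j * (t + 1)) * Tq q (t + 1)) with hterm
  have hsum1 : Summable (fun t : ℕ => (1 + q ^ (j + 1)) * (q ^ ((j + 1) * (t + 1))
      * Tq q (t + 1))) := (summable_qT hq (j + 1) (by omega)).mul_left _
  have hsum2 := summable_coeff hq j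
  have hterm_summable : Summable term := hsum1.sub hsum2
  have hpartial : ∀ N : ℕ, ∑ t ∈ Finset.range N, term t = G 0 - G N := by
    intro N
    have h1 : ∀ t ∈ Finset.range N, term t = G t - G (t + 1) := by
      intro t _
      exact term_eq hq j t
    rw [Finset.sum_congr rfl h1, Finset.sum_range_sub' G]
  have hlim : Tendsto (fun N => ∑ t ∈ Finset.range N, term t) atTop
      (𝓝 (G 0 - (if j = 0 then 1 else 0))) := by
    have h2 : Tendsto (fun N => G 0 - G N) atTop (𝓝 (G 0 - (if j = 0 then 1 else 0))) :=
      tendsto_const_nhds.sub (tendsto_G hq j)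
    exact h2.congr (fun N => (hpartial N).symm)
  have hval : ∑' t, term t = G 0 - (if j = 0 then 1 else 0) :=
    tendsto_nhds_unique hterm_summable.hasSum.tendsto_sum_nat hlim
  have hsplit : ∑' t, term t = (1 + q ^ (j + 1)) * Sq q (j + 1)
      - ∑' t : ℕ, (q ^ j - 1) * (q ^ (j * (t + 1)) * Tq q (t + 1)) := by
    rw [hterm]
    rw [Summable.tsum_sub hsum1 hsum2, (summable_qT hq (j + 1) (by omega)).tsum_mul_left]
    rfl
  rw [← hsplit, hval]

lemma Sq_one (hq : ‖q‖ < 1) : (1 + q) * Sq q 1 = (q + 1) * Tq q 1 - 1 := by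
  have h := tsum_term hq 0
  simp only [pow_zero, sub_self, zero_mul, tsum_zero, sub_zero, if_pos rfl] at h
  have e1 : (0 : ℕ) + 1 = 1 := rfl
  rw [e1] at h
  have e2 : (1 : ℕ) * 1 = 1 := rfl
  calc (1 + q) * Sq q 1 = (1 + q ^ (0 + 1)) * Sq q (0 + 1) := by norm_num
    _ = (q ^ ((0 + 1) * (0 + 1)) + q ^ (0 * (0 + 1))) * Tq q (0 + 1) - 1 := h
    _ = (q + 1) * Tq q 1 - 1 := by norm_num

lemma Sq_rec (hq : ‖q‖ < 1) (i : ℕ) :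
    (1 + q ^ (i + 2)) * Sq q (i + 2) - (q ^ (i + 1) - 1) * Sq q (i + 1)
      = (q ^ (i + 2) + q ^ (i + 1)) * Tq q 1 := by
  have h := tsum_term hq (i + 1)
  rw [if_neg (by omega)] at h
  have hS : ∑' t : ℕ, (q ^ (i + 1) - 1) * (q ^ ((i + 1) * (t + 1)) * Tq q (t + 1))
      = (q ^ (i + 1) - 1) * Sq q (i + 1) :=
    (summable_qT hq (i + 1) (by omega)).tsum_mul_left _
  rw [hS, sub_zero] at h
  calc (1 + q ^ (i + 2)) * Sq q (i + 2) - (q ^ (i + 1) - 1) * Sq q (i + 1)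
      = (1 + q ^ (i + 1 + 1)) * Sq q (i + 1 + 1) - (q ^ (i + 1) - 1) * Sq q (i + 1) := by norm_num
    _ = (q ^ ((i + 1 + 1) * (0 + 1)) + q ^ ((i + 1) * (0 + 1))) * Tq q (0 + 1) := h
    _ = (q ^ (i + 2) + q ^ (i + 1)) * Tq q 1 := by norm_num

lemma qPoch_neg_ne_zero (hq : ‖q‖ < 1) (N : ℕ) : qPoch (-q) q N ≠ 0 := by
  rw [qPoch]
  apply Finset.prod_ne_zero_iff.2
  intro j _
  have e : (1 : ℂ) - -q * q ^ j = 1 + q ^ (j + 1) := by rw [pow_succ]; ring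
  rw [e]
  exact one_add_pow_ne_zero hq j

lemma Sq_val (hq : ‖q‖ < 1) : ∀ j : ℕ,
    Sq q (j + 1) = Pbar q (j + 1) * Tq q 1
      + (-1) ^ (j + 1) * (qPoch q q j * (qPoch (-q) q (j + 1))⁻¹) := by
  intro j
  induction j with
  | zero =>
    have key := Sq_one hq
    have hne : (1 : ℂ) + q ≠ 0 := by
      have h := one_add_pow_ne_zero hq 0
      rwa [pow_one] at h
    have hPb : Pbar q 1 = 1 := rfl
    have hP0 : qPoch q q 0 = 1 := by rw [qPoch, Finset.prod_range_zero]
    have hD1 : qPoch (-q) q 1 = 1 + q := by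
      rw [qPoch, Finset.prod_range_one, pow_zero, mul_one]
      ring
    rw [hPb, hP0, hD1, one_mul, one_mul]
    apply mul_left_cancel₀ hne
    rw [mul_add]
    rw [show (1 + q) * ((-1) ^ (0 + 1) * (1 + q)⁻¹)
      = -((1 + q) * (1 + q)⁻¹) by ring, mul_inv_cancel₀ hne]
    linear_combination key
  | succ i IH =>
    have key := Sq_rec hq i
    have hne2 : (1 : ℂ) + q ^ (i + 2) ≠ 0 := one_add_pow_ne_zero hq (i + 1)
    have hDne : qPoch (-q) q (i + 1) ≠ 0 := qPoch_neg_ne_zero hq (i + 1)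
    have hD : qPoch (-q) q (i + 2) = qPoch (-q) q (i + 1) * (1 + q ^ (i + 2)) := by
      rw [qPoch, qPoch, Finset.prod_range_succ]
      have e : (1 : ℂ) - -q * q ^ (i + 1) = 1 + q ^ (i + 2) := by rw [pow_succ]; ring
      rw [e]
    have hP : qPoch q q (i + 1) = qPoch q q i * (1 - q ^ (i + 1)) := by
      rw [qPoch, qPoch, Finset.prod_range_succ]
      have e : (1 : ℂ) - q * q ^ i = 1 - q ^ (i + 1) := by rw [pow_succ]; ring
      rw [e]
    have hPbar : Pbar q (i + 2) = ((q ^ (i + 1) - 1) * Pbar q (i + 1) + q ^ (i + 1) * (1 + q))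
        * (1 + q ^ (i + 2))⁻¹ := by
      show ((q ^ (i + 1) - 1) * Pbar q (i + 1) + q ^ (i + 1) * (1 + q)) / (1 + q ^ (i + 2)) = _
      rw [div_eq_mul_inv]
    have hS : (1 + q ^ (i + 2)) * Sq q (i + 2)
        = (q ^ (i + 1) - 1) * Sq q (i + 1) + (q ^ (i + 2) + q ^ (i + 1)) * Tq q 1 := by
      linear_combination key
    apply mul_left_cancel₀ hne2
    rw [hS, IH, hPbar, hD, hP]
    field_simp
    ring
end SptbarProof
/-- Theorem 2.1: generating function for `sptbar k`. -/
theorem sptbar_genFn (k : ℕ) (hk : 1 ≤ k) (q : ℂ) (hq : ‖q‖ < 1) :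
    ∑' n : ℕ, (sptbar k (n + 1) : ℂ) * q ^ (n + 1) =
      Pbar q k * (qPochInf (-q ^ 2) q / qPochInf (q ^ 2) q) +
        (-1) ^ k * (qPoch q q (k - 1) / qPoch (-q) q k) := by
  have hq' : ‖q‖ < 1 := hq
  obtain ⟨j, rfl⟩ : ∃ j, k = j + 1 := ⟨k - 1, by omega⟩
  have h := SptbarProof.hasSum_sptbar (k := j + 1) hk hq'
  have hzero := Summable.tsum_eq_zero_add h.summable
  rw [SptbarProof.sptbar_zero hk] at hzero
  simp only [Nat.cast_zero, zero_mul, pow_zero, mul_one, zero_add] at hzero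
  have hfinal : ∑' n : ℕ, (sptbar (j + 1) (n + 1) : ℂ) * q ^ (n + 1)
      = SptbarProof.Sq q (j + 1) := by
    rw [← hzero]
    exact h.tsum_eq
  rw [hfinal, SptbarProof.Sq_val hq' j]
  have hT1 : SptbarProof.Tq q 1 = qPochInf (-q ^ 2) q / qPochInf (q ^ 2) q := by
    rw [SptbarProof.Tq, div_eq_mul_inv]
  rw [hT1]
  have hj : j + 1 - 1 = j := by omega
  rw [hj, div_eq_mul_inv (qPoch q q j)]
end

section
/- For every positive integer k and every complex number q with |q| < 1 (with 1+q^j ≠ 0 for the relevant j), the rational function Pbar_k defined by Pbar_1(q) = 1 and Pbar_k(q) = ((q^{k-1} - 1) Pbar_{k-1}(q) + q^{k-1}(1+q)) / (1+q^k) for k > 1 admits the closed form: Pbar_k(q) = q^{k-1}(1+q)/(1+q^k) − ((q;q)_{k-1} / (-q^2;q)_{k-1}) · sum over j from 0 to k−2 of (-1)^j q^{k-j-2} (-q;q)_{k-j-2} / (q;q)_{k-j-2}. -/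
open scoped BigOperators

section Aux

variable {q : ℂ}

lemma one_add_pow_ne (hq : ‖q‖ < 1) {m : ℕ} (hm : 1 ≤ m) :
    (1 : ℂ) + q ^ m ≠ 0 := by
  intro h0
  have hqm : q ^ m = -1 := by linear_combination h0
  have : ‖q ^ m‖ = 1 := by rw [hqm]; simp
  rw [norm_pow] at this
  have hlt : ‖q‖ ^ m < 1 :=
    pow_lt_one₀ (norm_nonneg q) hq (by omega)
  linarith

lemma one_sub_pow_ne (hq : ‖q‖ < 1) {m : ℕ} (hm : 1 ≤ m) :
    (1 : ℂ) - q ^ m ≠ 0 := by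
  intro h0
  have hqm : q ^ m = 1 := by linear_combination -h0
  have : ‖q ^ m‖ = 1 := by rw [hqm]; simp
  rw [norm_pow] at this
  have hlt : ‖q‖ ^ m < 1 :=
    pow_lt_one₀ (norm_nonneg q) hq (by omega)
  linarith

lemma qPoch_qq_ne (hq : ‖q‖ < 1) (N : ℕ) : qPoch q q N ≠ 0 := by
  rw [qPoch]
  apply Finset.prod_ne_zero_iff.2
  intro j _
  have : (1 : ℂ) - q * q ^ j = 1 - q ^ (j + 1) := by ring
  rw [this]
  exact one_sub_pow_ne hq (by omega)

lemma qPoch_nq2_ne (hq : ‖q‖ < 1) (N : ℕ) : qPoch (-q ^ 2) q N ≠ 0 := by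
  rw [qPoch]
  apply Finset.prod_ne_zero_iff.2
  intro j _
  have : (1 : ℂ) - -q ^ 2 * q ^ j = 1 + q ^ (j + 2) := by ring
  rw [this]
  exact one_add_pow_ne hq (by omega)

lemma qPoch_succ (a : ℂ) (N : ℕ) :
    qPoch a q (N + 1) = qPoch a q N * (1 - a * q ^ N) := by
  rw [qPoch, qPoch, Finset.prod_range_succ]

lemma qPoch_ratio (k : ℕ) :
    (1 + q ^ (k + 1)) * qPoch (-q) q k = (1 + q) * qPoch (-q ^ 2) q k := by
  induction k with
  | zero => simp [qPoch]
  | succ n ih =>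
      rw [qPoch_succ, qPoch_succ]
      have h1 : (1 : ℂ) - -q * q ^ n = 1 + q ^ (n + 1) := by ring
      have h2 : (1 : ℂ) - -q ^ 2 * q ^ n = 1 + q ^ (n + 2) := by ring
      rw [h1, h2]
      linear_combination (1 + q ^ (n + 2)) * ih

lemma Pbar_closed_aux (q : ℂ) (hq : ‖q‖ < 1) (k : ℕ) :
    Pbar q (k + 1) = q ^ k * (1 + q) / (1 + q ^ (k + 1)) -
      qPoch q q k / qPoch (-q ^ 2) q k *
        ∑ j ∈ Finset.range k, (-1 : ℂ) ^ j * q ^ (k - j - 1) *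
          (qPoch (-q) q (k - j - 1) / qPoch q q (k - j - 1)) := by
  induction k with
  | zero =>
      have h1 : (1 : ℂ) + q ≠ 0 := by
        have := one_add_pow_ne hq (le_refl 1) (q := q)
        rwa [pow_one] at this
      show (1 : ℂ) = _
      simp only [Finset.range_zero, Finset.sum_empty, mul_zero, sub_zero, pow_zero,
        one_mul, pow_one]
      norm_num [div_self h1]
  | succ k ih =>
      have ha : (1 : ℂ) + q ^ (k + 1) ≠ 0 := one_add_pow_ne hq (by omega)
      have hb : (1 : ℂ) + q ^ (k + 2) ≠ 0 := one_add_pow_ne hq (by omega)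
      have hP : qPoch q q k ≠ 0 := qPoch_qq_ne hq k
      have hQ : qPoch (-q ^ 2) q k ≠ 0 := qPoch_nq2_ne hq k
      -- sum recursion
      have hsum : ∑ j ∈ Finset.range (k + 1), (-1 : ℂ) ^ j * q ^ (k + 1 - j - 1) *
            (qPoch (-q) q (k + 1 - j - 1) / qPoch q q (k + 1 - j - 1)) =
          -(∑ j ∈ Finset.range k, (-1 : ℂ) ^ j * q ^ (k - j - 1) *
            (qPoch (-q) q (k - j - 1) / qPoch q q (k - j - 1))) +
          q ^ k * (qPoch (-q) q k / qPoch q q k) := by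
        rw [Finset.sum_range_succ']
        have h1 : ∀ j ∈ Finset.range k, (-1 : ℂ) ^ (j + 1) * q ^ (k + 1 - (j + 1) - 1) *
              (qPoch (-q) q (k + 1 - (j + 1) - 1) / qPoch q q (k + 1 - (j + 1) - 1)) =
            -((-1 : ℂ) ^ j * q ^ (k - j - 1) *
              (qPoch (-q) q (k - j - 1) / qPoch q q (k - j - 1))) := by
          intro j hj
          have he : k + 1 - (j + 1) - 1 = k - j - 1 := by omega
          rw [he]; ring
        rw [Finset.sum_congr rfl h1, Finset.sum_neg_distrib]
        norm_num
      have hPbar : Pbar q (k + 2) =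
          ((q ^ (k + 1) - 1) * Pbar q (k + 1) + q ^ (k + 1) * (1 + q)) /
            (1 + q ^ (k + 2)) := rfl
      rw [hPbar, ih, hsum]
      rw [qPoch_succ q, qPoch_succ (-q ^ 2)]
      have hN : qPoch (-q) q k = (1 + q) * qPoch (-q ^ 2) q k / (1 + q ^ (k + 1)) := by
        field_simp
        linear_combination qPoch_ratio (q := q) k
      rw [hN]
      have h1 : (1 : ℂ) - q * q ^ k = 1 - q ^ (k + 1) := by ring
      have h2 : (1 : ℂ) - -q ^ 2 * q ^ k = 1 + q ^ (k + 2) := by ring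
      rw [h1, h2]
      field_simp
      ring

end Aux

/-- Theorem 2.2: closed form for `Pbar q k`. -/
theorem Pbar_closed_form (k : ℕ) (hk : 1 ≤ k) (q : ℂ) (hq : ‖q‖ < 1) :
    Pbar q k = q ^ (k - 1) * (1 + q) / (1 + q ^ k) -
      qPoch q q (k - 1) / qPoch (-q ^ 2) q (k - 1) *
        ∑ j ∈ Finset.range (k - 1), (-1 : ℂ) ^ j * q ^ (k - j - 2) *
          (qPoch (-q) q (k - j - 2) / qPoch q q (k - j - 2)) := by
  obtain ⟨m, rfl⟩ : ∃ m, k = m + 1 := ⟨k - 1, by omega⟩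
  have := Pbar_closed_aux q hq m
  simp only [Nat.add_sub_cancel]
  rw [this]
  congr 2
  apply Finset.sum_congr rfl
  intro j hj
  have hj' : j < m := Finset.mem_range.1 hj
  have he : m + 1 - j - 2 = m - j - 1 := by omega
  rw [he]
end

section
/- For every integer n > 1, sptbar_1(n) + sptbar_1(n−1) equals the number of overpartitions of n that have no non-overlined parts equal to 1. -/
open scoped BigOperators

section Aux

theorem Overpartition.ext' {n : ℕ} {π ρ : Overpartition n}
    (h1 : π.parts = ρ.parts) (h2 : π.overlined = ρ.overlined) : π = ρ := by
  cases π; cases ρ; simp_all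

/-- overlined sum as multiset sum -/
lemma finset_sum_val (s : Finset ℕ) : ∑ x ∈ s, x = s.val.sum := by
  rw [Finset.sum, Multiset.map_id']

instance overpartitionFinite (n : ℕ) : Finite (Overpartition n) := by
  classical
  let g : Overpartition n → n.Partition × {s : Finset ℕ // s ∈ (Finset.range (n+1)).powerset} :=
    fun π =>
      (⟨π.parts + π.overlined.val,
        by
          intro i hi
          rcases Multiset.mem_add.mp hi with h | h
          · exact π.parts_pos i h
          · exact π.overlined_pos i h,
        by
          have := π.sum_eq
          rw [Multiset.sum_add, ← finset_sum_val]
          exact this⟩,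
       ⟨π.overlined, by
          rw [Finset.mem_powerset]
          intro x hx
          have hle : x ≤ ∑ y ∈ π.overlined, y :=
            Finset.single_le_sum (f := fun y => y) (fun i _ => Nat.zero_le i) hx
          have := π.sum_eq
          rw [Finset.mem_range]
          omega⟩)
  have hg : Function.Injective g := by
    intro a b hab
    have h2 : a.overlined = b.overlined := congrArg (fun p => p.2.1) hab
    have h1 : a.parts + a.overlined.val = b.parts + b.overlined.val :=
      congrArg (fun p => p.1.parts) hab
    rw [h2] at h1
    exact Overpartition.ext' (add_right_cancel h1) h2
  exact Finite.of_injective g hg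

def Qc {n : ℕ} (ρ : Overpartition n) : Prop :=
  ∃ s, s ∈ ρ.overlined ∧ (∀ x ∈ ρ.parts, s < x) ∧ ∀ y ∈ ρ.overlined, s ≤ y

def Rc {n : ℕ} (ρ : Overpartition n) : Prop :=
  ∃ s, s ∈ ρ.parts ∧ (∀ x ∈ ρ.parts, s ≤ x) ∧ ∀ y ∈ ρ.overlined, s ≤ y

lemma notQ_iff_R {n : ℕ} (hn : 0 < n) (ρ : Overpartition n) : ¬ Qc ρ ↔ Rc ρ := by
  rcases eq_or_ne ρ.parts 0 with hp | hp
  · have hov : ρ.overlined.Nonempty := by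
      rcases Finset.eq_empty_or_nonempty ρ.overlined with h | h
      · exfalso
        have := ρ.sum_eq
        rw [hp, h] at this
        simp at this
        omega
      · exact h
    have hQ : Qc ρ := ⟨ρ.overlined.min' hov, Finset.min'_mem _ _,
      fun x hx => by rw [hp] at hx; simp at hx,
      fun y hy => Finset.min'_le _ _ hy⟩
    constructor
    · intro h; exact absurd hQ h
    · rintro ⟨s, hs, -⟩; rw [hp] at hs; simp at hs
  · have hpts : ρ.parts.toFinset.Nonempty := by
      obtain ⟨a, ha⟩ := Multiset.exists_mem_of_ne_zero hp
      exact ⟨a, Multiset.mem_toFinset.mpr ha⟩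
    set a := ρ.parts.toFinset.min' hpts with ha
    have hamem : a ∈ ρ.parts := Multiset.mem_toFinset.mp (Finset.min'_mem _ _)
    have hamin : ∀ x ∈ ρ.parts, a ≤ x := fun x hx =>
      Finset.min'_le _ _ (Multiset.mem_toFinset.mpr hx)
    rcases Finset.eq_empty_or_nonempty ρ.overlined with ho | ho
    · constructor
      · intro _; exact ⟨a, hamem, hamin, fun y hy => by rw [ho] at hy; simp at hy⟩
      · rintro - ⟨s, hs, -⟩; rw [ho] at hs; simp at hs
    · set b := ρ.overlined.min' ho with hb
      have hbmem : b ∈ ρ.overlined := Finset.min'_mem _ _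
      have hbmin : ∀ y ∈ ρ.overlined, b ≤ y := fun y hy => Finset.min'_le _ _ hy
      rcases le_or_gt a b with hab | hab
      · constructor
        · intro _
          exact ⟨a, hamem, hamin, fun y hy => le_trans hab (hbmin y hy)⟩
        · rintro - ⟨s, hsmem, hslt, hsle⟩
          have h1 : b ≤ s := hbmin s hsmem
          have h2 : s < a := hslt a hamem
          omega
      · constructor
        · intro hnQ
          exact absurd ⟨b, hbmem, fun x hx => lt_of_lt_of_le hab (hamin x hx), hbmin⟩ hnQ
        · rintro ⟨s, hsmem, -, hsle⟩ -
          have h1 : a ≤ s := hamin s hsmem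
          have h2 : s ≤ b := hsle b hbmem
          omega

end Aux

section Maps

lemma sptbar_notMem_ov {n : ℕ} {π : Overpartition n} {s : ℕ} (h : SptbarCond 1 π s) :
    s ∉ π.overlined := fun hs => lt_irrefl s (h.2.2.2 s hs)

lemma sptbar_erase_gt {n : ℕ} {π : Overpartition n} {s : ℕ} (h : SptbarCond 1 π s) :
    ∀ x ∈ π.parts.erase s, s < x := by
  intro x hx
  have hxs : x ≠ s := by
    rintro rfl
    have hc : (π.parts.erase x).count x = 0 := by
      rw [Multiset.count_erase_self, h.2.2.1]
    have := Multiset.count_pos.mpr hx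
    omega
  exact lt_of_le_of_ne (h.2.1 x (Multiset.mem_of_mem_erase hx)) (Ne.symm hxs)

noncomputable def fwd1 {n : ℕ} (π : Overpartition n) (s : ℕ) (h : SptbarCond 1 π s) :
    Overpartition n where
  parts := π.parts.erase s
  overlined := insert s π.overlined
  parts_pos := fun x hx => π.parts_pos x (Multiset.mem_of_mem_erase hx)
  overlined_pos := by
    intro x hx
    rcases Finset.mem_insert.mp hx with rfl | hx
    · exact π.parts_pos x h.1
    · exact π.overlined_pos x hx
  sum_eq := by
    have h1 : s + (π.parts.erase s).sum = π.parts.sum := by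
      rw [← Multiset.sum_cons, Multiset.cons_erase h.1]
    rw [Finset.sum_insert (sptbar_notMem_ov h)]
    have := π.sum_eq
    omega

lemma fwd1_prop {n : ℕ} (π : Overpartition n) (s : ℕ) (h : SptbarCond 1 π s) :
    (1 : ℕ) ∉ (fwd1 π s h).parts ∧ Qc (fwd1 π s h) := by
  have hs1 : 1 ≤ s := π.parts_pos s h.1
  constructor
  · intro hmem
    have := sptbar_erase_gt h 1 hmem
    omega
  · exact ⟨s, Finset.mem_insert_self _ _, sptbar_erase_gt h, by
      intro y hy
      rcases Finset.mem_insert.mp hy with rfl | hy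
      · exact le_refl _
      · exact le_of_lt (h.2.2.2 y hy)⟩

noncomputable def bwd1 {n : ℕ} (ρ : Overpartition n) (s : ℕ) (hmem : s ∈ ρ.overlined) :
    Overpartition n where
  parts := s ::ₘ ρ.parts
  overlined := ρ.overlined.erase s
  parts_pos := by
    intro x hx
    rcases Multiset.mem_cons.mp hx with rfl | hx
    · exact ρ.overlined_pos x hmem
    · exact ρ.parts_pos x hx
  overlined_pos := fun x hx => ρ.overlined_pos x (Finset.mem_of_mem_erase hx)
  sum_eq := by
    have h1 : ∑ x ∈ ρ.overlined.erase s, x + s = ∑ x ∈ ρ.overlined, x :=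
      Finset.sum_erase_add _ _ hmem
    rw [Multiset.sum_cons]
    have := ρ.sum_eq
    omega

lemma bwd1_cond {n : ℕ} (ρ : Overpartition n) (s : ℕ) (hmem : s ∈ ρ.overlined)
    (hlt : ∀ x ∈ ρ.parts, s < x) (hmin : ∀ y ∈ ρ.overlined, s ≤ y) :
    SptbarCond 1 (bwd1 ρ s hmem) s := by
  refine ⟨Multiset.mem_cons_self _ _, ?_, ?_, ?_⟩
  · intro x hx
    rcases Multiset.mem_cons.mp hx with rfl | hx
    · exact le_refl _
    · exact le_of_lt (hlt x hx)
  · have hns : s ∉ ρ.parts := fun hs => lt_irrefl s (hlt s hs)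
    show (s ::ₘ ρ.parts).count s = 1
    rw [Multiset.count_cons_self, Multiset.count_eq_zero_of_notMem hns]
  · intro y hy
    have h1 := Finset.mem_erase.mp hy
    exact lt_of_le_of_ne (hmin y h1.2) (Ne.symm h1.1)

lemma sptbar_choose_eq {n : ℕ} {π : Overpartition n} (h : ∃ s, SptbarCond 1 π s) {s : ℕ}
    (hs : SptbarCond 1 π s) : h.choose = s :=
  le_antisymm (h.choose_spec.2.1 s hs.1) (hs.2.1 _ h.choose_spec.1)

lemma Qc_choose_eq {n : ℕ} {ρ : Overpartition n} (h : Qc ρ) {s : ℕ}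
    (hm : s ∈ ρ.overlined) (hmin : ∀ y ∈ ρ.overlined, s ≤ y) : h.choose = s :=
  le_antisymm (h.choose_spec.2.2 s hm) (hmin _ h.choose_spec.1)

lemma Rc_choose_eq {n : ℕ} {ρ : Overpartition n} (h : Rc ρ) {s : ℕ}
    (hm : s ∈ ρ.parts) (hmin : ∀ x ∈ ρ.parts, s ≤ x) : h.choose = s :=
  le_antisymm (h.choose_spec.2.1 s hm) (hmin _ h.choose_spec.1)

lemma bwd1_fwd1 {n : ℕ} (π : Overpartition n) (s t : ℕ) (h : SptbarCond 1 π s)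
    (hm : t ∈ (fwd1 π s h).overlined)
    (hmint : ∀ y ∈ (fwd1 π s h).overlined, t ≤ y) :
    bwd1 (fwd1 π s h) t hm = π := by
  have hts : t = s := by
    have h1 : t ≤ s := hmint s (Finset.mem_insert_self _ _)
    have h2 : s ≤ t := by
      rcases Finset.mem_insert.mp hm with rfl | hmm
      · exact le_refl _
      · exact le_of_lt (h.2.2.2 t hmm)
    omega
  subst hts
  apply Overpartition.ext'
  · show t ::ₘ (π.parts.erase t) = π.parts
    exact Multiset.cons_erase h.1
  · show (insert t π.overlined).erase t = π.overlined
    exact Finset.erase_insert (sptbar_notMem_ov h)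

lemma fwd1_bwd1 {n : ℕ} (ρ : Overpartition n) (s t : ℕ) (hm : s ∈ ρ.overlined)
    (hlt : ∀ x ∈ ρ.parts, s < x) (ht : SptbarCond 1 (bwd1 ρ s hm) t) :
    fwd1 (bwd1 ρ s hm) t ht = ρ := by
  have hts : t = s := by
    have h1 : t ≤ s := ht.2.1 s (Multiset.mem_cons_self _ _)
    have h2 : s ≤ t := by
      rcases Multiset.mem_cons.mp ht.1 with rfl | hmm
      · exact le_refl _
      · exact le_of_lt (hlt t hmm)
    omega
  subst hts
  apply Overpartition.ext'
  · show (t ::ₘ ρ.parts).erase t = ρ.parts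
    exact Multiset.erase_cons_head _ _
  · show insert t (ρ.overlined.erase t) = ρ.overlined
    exact Finset.insert_erase hm

noncomputable def E1 (n : ℕ) :
    {π : Overpartition n // ∃ s, SptbarCond 1 π s} ≃
      {ρ : Overpartition n // (1 : ℕ) ∉ ρ.parts ∧ Qc ρ} where
  toFun x := ⟨fwd1 x.1 (Exists.choose x.2) (Exists.choose_spec x.2), fwd1_prop _ _ _⟩
  invFun y := ⟨bwd1 y.1 (Exists.choose y.2.2) (Exists.choose_spec y.2.2).1,
    ⟨(Exists.choose y.2.2), bwd1_cond _ _ (Exists.choose_spec y.2.2).1 (Exists.choose_spec y.2.2).2.1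
      (Exists.choose_spec y.2.2).2.2⟩⟩
  left_inv x := Subtype.ext (bwd1_fwd1 x.1 (Exists.choose x.2) _ (Exists.choose_spec x.2)
    (Exists.choose_spec (fwd1_prop x.1 (Exists.choose x.2) (Exists.choose_spec x.2)).2).1
    (Exists.choose_spec (fwd1_prop x.1 (Exists.choose x.2) (Exists.choose_spec x.2)).2).2.2)
  right_inv y := Subtype.ext (fwd1_bwd1 y.1 (Exists.choose y.2.2) _
    (Exists.choose_spec y.2.2).1
    (Exists.choose_spec y.2.2).2.1
    (Exists.choose_spec (⟨Exists.choose y.2.2, bwd1_cond _ _ (Exists.choose_spec y.2.2).1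
      (Exists.choose_spec y.2.2).2.1 (Exists.choose_spec y.2.2).2.2⟩ :
        ∃ s, SptbarCond 1 (bwd1 y.1 (Exists.choose y.2.2) (Exists.choose_spec y.2.2).1) s)))

noncomputable def fwd2 (n : ℕ) (hn : 1 ≤ n) (π : Overpartition (n-1)) (s : ℕ)
    (h : SptbarCond 1 π s) : Overpartition n where
  parts := (s+1) ::ₘ π.parts.erase s
  overlined := π.overlined
  parts_pos := by
    intro x hx
    rcases Multiset.mem_cons.mp hx with rfl | hx
    · omega
    · exact π.parts_pos x (Multiset.mem_of_mem_erase hx)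
  overlined_pos := π.overlined_pos
  sum_eq := by
    have h1 : s + (π.parts.erase s).sum = π.parts.sum := by
      rw [← Multiset.sum_cons, Multiset.cons_erase h.1]
    rw [Multiset.sum_cons]
    have := π.sum_eq
    omega

lemma fwd2_prop (n : ℕ) (hn : 1 ≤ n) (π : Overpartition (n-1)) (s : ℕ)
    (h : SptbarCond 1 π s) :
    (1 : ℕ) ∉ (fwd2 n hn π s h).parts ∧ Rc (fwd2 n hn π s h) := by
  have hgt := sptbar_erase_gt h
  constructor
  · intro hmem
    rcases Multiset.mem_cons.mp hmem with heq | hmem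
    · have := π.parts_pos s h.1
      omega
    · have := hgt 1 hmem
      have := π.parts_pos s h.1
      omega
  · refine ⟨s+1, Multiset.mem_cons_self _ _, ?_, ?_⟩
    · intro x hx
      rcases Multiset.mem_cons.mp hx with rfl | hx
      · exact le_refl _
      · exact hgt x hx
    · intro y hy
      exact h.2.2.2 y hy

lemma two_le_of_mem {n : ℕ} {ρ : Overpartition n} (h1 : (1 : ℕ) ∉ ρ.parts) {s : ℕ}
    (hs : s ∈ ρ.parts) : 2 ≤ s := by
  have hpos := ρ.parts_pos s hs
  rcases Nat.lt_or_ge s 2 with h | h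
  · interval_cases s
    · exact absurd hs h1
  · exact h

noncomputable def bwd2 (n : ℕ) (ρ : Overpartition n) (s : ℕ) (hmem : s ∈ ρ.parts)
    (hs2 : 2 ≤ s) : Overpartition (n-1) where
  parts := (s-1) ::ₘ ρ.parts.erase s
  overlined := ρ.overlined
  parts_pos := by
    intro x hx
    rcases Multiset.mem_cons.mp hx with rfl | hx
    · omega
    · exact ρ.parts_pos x (Multiset.mem_of_mem_erase hx)
  overlined_pos := ρ.overlined_pos
  sum_eq := by
    have h1 : s + (ρ.parts.erase s).sum = ρ.parts.sum := by
      rw [← Multiset.sum_cons, Multiset.cons_erase hmem]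
    rw [Multiset.sum_cons]
    have := ρ.sum_eq
    omega

lemma bwd2_cond (n : ℕ) (ρ : Overpartition n) (s : ℕ) (hmem : s ∈ ρ.parts) (hs2 : 2 ≤ s)
    (hmin : ∀ x ∈ ρ.parts, s ≤ x) (hminov : ∀ y ∈ ρ.overlined, s ≤ y) :
    SptbarCond 1 (bwd2 n ρ s hmem hs2) (s-1) := by
  have herase : ∀ x ∈ ρ.parts.erase s, s ≤ x :=
    fun x hx => hmin x (Multiset.mem_of_mem_erase hx)
  refine ⟨Multiset.mem_cons_self _ _, ?_, ?_, ?_⟩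
  · intro x hx
    rcases Multiset.mem_cons.mp hx with rfl | hx
    · exact le_refl _
    · have := herase x hx; omega
  · have hns : s - 1 ∉ ρ.parts.erase s := by
      intro hc
      have := herase _ hc
      omega
    show ((s - 1) ::ₘ ρ.parts.erase s).count (s-1) = 1
    rw [Multiset.count_cons_self, Multiset.count_eq_zero_of_notMem hns]
  · intro y hy
    have := hminov y hy
    omega

lemma bwd2_fwd2 (n : ℕ) (hn : 1 ≤ n) (π : Overpartition (n-1)) (s : ℕ)
    (h : SptbarCond 1 π s) (t : ℕ) (hm : t ∈ (fwd2 n hn π s h).parts) (ht2 : 2 ≤ t)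
    (hmin : ∀ x ∈ (fwd2 n hn π s h).parts, t ≤ x) :
    bwd2 n (fwd2 n hn π s h) t hm ht2 = π := by
  have hts : t = s + 1 := by
    have h1 : t ≤ s + 1 := hmin (s+1) (Multiset.mem_cons_self _ _)
    have h2 : s + 1 ≤ t := by
      rcases Multiset.mem_cons.mp hm with rfl | hmm
      · exact le_refl _
      · exact sptbar_erase_gt h t hmm
    omega
  subst hts
  apply Overpartition.ext'
  · show ((s+1) - 1) ::ₘ (((s+1) ::ₘ π.parts.erase s).erase (s+1)) = π.parts
    rw [Multiset.erase_cons_head]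
    have : s + 1 - 1 = s := by omega
    rw [this]
    exact Multiset.cons_erase h.1
  · rfl

lemma fwd2_bwd2 (n : ℕ) (hn : 1 ≤ n) (ρ : Overpartition n) (s : ℕ) (hmem : s ∈ ρ.parts)
    (hs2 : 2 ≤ s) (hmin : ∀ x ∈ ρ.parts, s ≤ x) (t : ℕ)
    (ht : SptbarCond 1 (bwd2 n ρ s hmem hs2) t) :
    fwd2 n hn (bwd2 n ρ s hmem hs2) t ht = ρ := by
  have hts : t = s - 1 := by
    have h1 : t ≤ s - 1 := ht.2.1 (s-1) (Multiset.mem_cons_self _ _)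
    have h2 : s - 1 ≤ t := by
      rcases Multiset.mem_cons.mp ht.1 with rfl | hmm
      · exact le_refl _
      · have := hmin t (Multiset.mem_of_mem_erase hmm)
        omega
    omega
  subst hts
  apply Overpartition.ext'
  · show ((s-1)+1) ::ₘ (((s-1) ::ₘ ρ.parts.erase s).erase (s-1)) = ρ.parts
    rw [Multiset.erase_cons_head]
    have : s - 1 + 1 = s := by omega
    rw [this]
    exact Multiset.cons_erase hmem
  · rfl

noncomputable def E2 (n : ℕ) (hn : 1 ≤ n) :
    {π : Overpartition (n-1) // ∃ s, SptbarCond 1 π s} ≃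
      {ρ : Overpartition n // (1 : ℕ) ∉ ρ.parts ∧ Rc ρ} where
  toFun x := ⟨fwd2 n hn x.1 (Exists.choose x.2) (Exists.choose_spec x.2), fwd2_prop _ _ _ _ _⟩
  invFun y := ⟨bwd2 n y.1 (Exists.choose y.2.2) (Exists.choose_spec y.2.2).1
      (two_le_of_mem y.2.1 (Exists.choose_spec y.2.2).1),
    ⟨Exists.choose y.2.2 - 1, bwd2_cond _ _ _ (Exists.choose_spec y.2.2).1
      (two_le_of_mem y.2.1 (Exists.choose_spec y.2.2).1)
      (Exists.choose_spec y.2.2).2.1 (Exists.choose_spec y.2.2).2.2⟩⟩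
  left_inv x := Subtype.ext (bwd2_fwd2 n hn x.1 (Exists.choose x.2) (Exists.choose_spec x.2) _
    (Exists.choose_spec (fwd2_prop n hn x.1 (Exists.choose x.2) (Exists.choose_spec x.2)).2).1
    (two_le_of_mem (fwd2_prop n hn x.1 (Exists.choose x.2) (Exists.choose_spec x.2)).1
      (Exists.choose_spec (fwd2_prop n hn x.1 (Exists.choose x.2) (Exists.choose_spec x.2)).2).1)
    (Exists.choose_spec (fwd2_prop n hn x.1 (Exists.choose x.2) (Exists.choose_spec x.2)).2).2.1)
  right_inv y := Subtype.ext (fwd2_bwd2 n hn y.1 (Exists.choose y.2.2)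
    (Exists.choose_spec y.2.2).1
    (two_le_of_mem y.2.1 (Exists.choose_spec y.2.2).1)
    (Exists.choose_spec y.2.2).2.1 _
    (Exists.choose_spec (⟨Exists.choose y.2.2 - 1, bwd2_cond _ _ _ (Exists.choose_spec y.2.2).1
      (two_le_of_mem y.2.1 (Exists.choose_spec y.2.2).1)
      (Exists.choose_spec y.2.2).2.1 (Exists.choose_spec y.2.2).2.2⟩ :
        ∃ s, SptbarCond 1 (bwd2 n y.1 (Exists.choose y.2.2) (Exists.choose_spec y.2.2).1
          (two_le_of_mem y.2.1 (Exists.choose_spec y.2.2).1)) s)))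


end Maps
/-- Corollary 4.1: `sptbar 1 n + sptbar 1 (n-1)` counts overpartitions of `n`
with no non-overlined part equal to `1`. -/
theorem sptbar_one_add (n : ℕ) (hn : 1 < n) :
    sptbar 1 n + sptbar 1 (n - 1) =
      Nat.card {π : Overpartition n // (1 : ℕ) ∉ π.parts} := by
  classical
  have h1 : sptbar 1 n = Nat.card {ρ : Overpartition n // (1:ℕ) ∉ ρ.parts ∧ Qc ρ} :=
    Nat.card_congr (E1 n)
  have h2 : sptbar 1 (n-1) = Nat.card {ρ : Overpartition n // (1:ℕ) ∉ ρ.parts ∧ Rc ρ} :=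
    Nat.card_congr (E2 n (by omega))
  have e : {π : Overpartition n // (1 : ℕ) ∉ π.parts} ≃
      {ρ : Overpartition n // (1:ℕ) ∉ ρ.parts ∧ Qc ρ} ⊕
        {ρ : Overpartition n // (1:ℕ) ∉ ρ.parts ∧ Rc ρ} := by
    refine (Equiv.sumCompl
      (fun x : {π : Overpartition n // (1 : ℕ) ∉ π.parts} => Qc x.1)).symm.trans
      (Equiv.sumCongr ?_ ?_)
    · exact Equiv.subtypeSubtypeEquivSubtypeInter _ _
    · exact (Equiv.subtypeSubtypeEquivSubtypeInter _ _).trans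
        (Equiv.subtypeEquivRight fun ρ => and_congr_right fun _ => notQ_iff_R (by omega) ρ)
  rw [h1, h2, Nat.card_congr e, Nat.card_sum]
end
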